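/- arXiv:1901.02311 — 4 statements merged into one kernel-verified Lean document; each statement's English description precedes it below -/
import Mathlib

section
/- Let 0<p<∞, 0<q≤∞ and 0<η≤1. There is a constant C such that: if a martingale f=(f_n)∈ℳ admits a representation f_n = ∑_{k∈ℤ} λ_k 𝔼_n a^k (almost everywhere, for every n), where λ_k≥0 and each a^k is a (p,∞)^S-atom associated to a stopping time ν^k, then f∈𝒬_{p,q} and ‖f‖_{𝒬_{p,q}} ≤ C‖∑_{k∈ℤ}(λ_k/ℙ(B_{ν^k})^{1/p})^η 1_{B_{ν^k}}‖_{p/η,q/η}^{1/η}. -/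
open MeasureTheory Filter
open scoped ENNReal ENat

noncomputable section

variable {Ω : Type*} {m0 : MeasurableSpace Ω}

/-- The Wiener amalgam quasi-norm `‖g‖_{p,q}` of an `ℝ≥0∞`-valued function `g`, with respect to
the partition `(Os j)_{j ∈ ℤ}` of `Ω`: for finite `q` it is
`(∑ j (∫_{Os j} g^p dμ)^{q/p})^{1/q}`, and for `q = ∞` it is `sup_j (∫_{Os j} g^p dμ)^{1/p}`. -/
def amalgamNorm (μ : Measure Ω) (Os : ℤ → Set Ω) (p : ℝ) (q : ℝ≥0∞) (g : Ω → ℝ≥0∞) : ℝ≥0∞ :=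
  if q = ∞ then ⨆ j : ℤ, (∫⁻ ω in Os j, g ω ^ p ∂μ) ^ (1 / p)
  else (∑' j : ℤ, (∫⁻ ω in Os j, g ω ^ p ∂μ) ^ (q.toReal / p)) ^ (1 / q.toReal)

/-- The amalgam quasi-norm of a real-valued function. -/
def amalgamNormR (μ : Measure Ω) (Os : ℤ → Set Ω) (p : ℝ) (q : ℝ≥0∞) (f : Ω → ℝ) : ℝ≥0∞ :=
  amalgamNorm μ Os p q fun ω => ENNReal.ofReal |f ω|

/-- The `L_r` norm (`0 < r ≤ ∞`) of an `ℝ≥0∞`-valued function. -/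
def lrNorm (μ : Measure Ω) (r : ℝ≥0∞) (g : Ω → ℝ≥0∞) : ℝ≥0∞ :=
  if r = ∞ then essSup g μ else (∫⁻ ω, g ω ^ r.toReal ∂μ) ^ (1 / r.toReal)

/-- The conditional square function `s(f) = (∑_n 𝔼_{n-1}|d_n f|²)^{1/2}` of the
process `f = (f_n)` (differences `d_{n+1} f = f_{n+1} - f_n`). -/
def condSq (ℱ : Filtration ℕ m0) (μ : Measure Ω) (f : ℕ → Ω → ℝ) : Ω → ℝ≥0∞ :=
  fun ω => (∑' n : ℕ, ENNReal.ofReal ((μ[(fun x => (f (n + 1) x - f n x) ^ 2)|ℱ n]) ω)) ^ (2⁻¹ : ℝ)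

/-- The truncated conditional square function `s_n(f) = (∑_{i=1}^n 𝔼_{i-1}|d_i f|²)^{1/2}`. -/
def condSqFin (ℱ : Filtration ℕ m0) (μ : Measure Ω) (f : ℕ → Ω → ℝ) (n : ℕ) : Ω → ℝ≥0∞ :=
  fun ω =>
    (∑ i ∈ Finset.range n, ENNReal.ofReal ((μ[(fun x => (f (i + 1) x - f i x) ^ 2)|ℱ i]) ω)) ^
      (2⁻¹ : ℝ)

/-- The square function `S(f) = (∑_n |d_n f|²)^{1/2}`. -/
def sqFn (f : ℕ → Ω → ℝ) : Ω → ℝ≥0∞ :=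
  fun ω => (∑' n : ℕ, ENNReal.ofReal ((f (n + 1) ω - f n ω) ^ 2)) ^ (2⁻¹ : ℝ)

/-- The truncated square function `S_n(f) = (∑_{i=1}^n |d_i f|²)^{1/2}` (real-valued). -/
def sqFnFin (f : ℕ → Ω → ℝ) (n : ℕ) : Ω → ℝ :=
  fun ω => Real.sqrt (∑ i ∈ Finset.range n, (f (i + 1) ω - f i ω) ^ 2)

/-- The maximal function `f* = sup_n |f_n|`. -/
def maxFn (f : ℕ → Ω → ℝ) : Ω → ℝ≥0∞ := fun ω => ⨆ n : ℕ, ENNReal.ofReal |f n ω|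

/-- A stopping time with values in `ℕ ∪ {∞}` for the filtration `ℱ`. -/
def IsStoppingTimeE (ℱ : Filtration ℕ m0) (ν : Ω → ℕ∞) : Prop :=
  ∀ n : ℕ, MeasurableSet[ℱ n] {ω | ν ω ≤ (n : ℕ∞)}

/-- `B_ν = {ν ≠ ∞}`. -/
def Bset (ν : Ω → ℕ∞) : Set Ω := {ω | ν ω ≠ ⊤}

/-- The `H^s_{p,q}` quasi-norm `‖s(f)‖_{p,q}` of a process `f`. -/
def HsNorm (ℱ : Filtration ℕ m0) (μ : Measure Ω) (Os : ℤ → Set Ω) (p : ℝ) (q : ℝ≥0∞)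
    (f : ℕ → Ω → ℝ) : ℝ≥0∞ :=
  amalgamNorm μ Os p q (condSq ℱ μ f)

/-- Membership in the class `Γ` of adapted, nondecreasing, nonnegative sequences. -/
def MemGamma (ℱ : Filtration ℕ m0) (β : ℕ → Ω → ℝ) : Prop :=
  Adapted ℱ β ∧ (∀ ω, Monotone fun n => β n ω) ∧ ∀ (n : ℕ) (ω : Ω), 0 ≤ β n ω

/-- `β_∞ = lim_n β_n (= sup_n β_n)` for a nondecreasing nonnegative sequence `β`. -/
def betaInfty (β : ℕ → Ω → ℝ) : Ω → ℝ≥0∞ := fun ω => ⨆ n, ENNReal.ofReal (β n ω)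

/-- The `𝒬_{p,q}` quasi-norm: the infimum of `‖β_∞‖_{p,q}` over all `β ∈ Γ`
with `S_{n}(f) ≤ β_{n-1}`. -/
def QNorm (ℱ : Filtration ℕ m0) (μ : Measure Ω) (Os : ℤ → Set Ω) (p : ℝ) (q : ℝ≥0∞)
    (f : ℕ → Ω → ℝ) : ℝ≥0∞ :=
  ⨅ (β : ℕ → Ω → ℝ) (_ : MemGamma ℱ β ∧ ∀ n : ℕ, ∀ᵐ ω ∂μ, sqFnFin f (n + 1) ω ≤ β n ω),
    amalgamNorm μ Os p q (betaInfty β)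

/-- The `𝒫_{p,q}` quasi-norm: the infimum of `‖β_∞‖_{p,q}` over all `β ∈ Γ`
with `|f_n| ≤ β_{n-1}`. -/
def PNorm (ℱ : Filtration ℕ m0) (μ : Measure Ω) (Os : ℤ → Set Ω) (p : ℝ) (q : ℝ≥0∞)
    (f : ℕ → Ω → ℝ) : ℝ≥0∞ :=
  ⨅ (β : ℕ → Ω → ℝ) (_ : MemGamma ℱ β ∧ ∀ n : ℕ, ∀ᵐ ω ∂μ, |f (n + 1) ω| ≤ β n ω),
    amalgamNorm μ Os p q (betaInfty β)

/-- A `(p,r)^s`-atom `a` associated to the stopping time `ν`. -/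
structure IsAtomS (ℱ : Filtration ℕ m0) (μ : Measure Ω) (p : ℝ) (r : ℝ≥0∞)
    (a : Ω → ℝ) (ν : Ω → ℕ∞) : Prop where
  stopping : IsStoppingTimeE ℱ ν
  integrable : Integrable a μ
  vanish : ∀ n : ℕ, ∀ᵐ ω ∂μ, (n : ℕ∞) ≤ ν ω → (μ[a|ℱ n]) ω = 0
  size : lrNorm μ r (condSq ℱ μ fun n => μ[a|ℱ n]) ≤ μ (Bset ν) ^ (1 / r.toReal - 1 / p)

/-- A `(p,q,r)^s`-atom `a` associated to the stopping time `ν`. -/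
structure IsAtomS' (ℱ : Filtration ℕ m0) (μ : Measure Ω) (Os : ℤ → Set Ω) (p : ℝ) (q r : ℝ≥0∞)
    (a : Ω → ℝ) (ν : Ω → ℕ∞) : Prop where
  stopping : IsStoppingTimeE ℱ ν
  integrable : Integrable a μ
  vanish : ∀ n : ℕ, ∀ᵐ ω ∂μ, (n : ℕ∞) ≤ ν ω → (μ[a|ℱ n]) ω = 0
  size : lrNorm μ r (condSq ℱ μ fun n => μ[a|ℱ n]) ≤
    μ (Bset ν) ^ (1 / r.toReal) * (amalgamNorm μ Os p q ((Bset ν).indicator 1))⁻¹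

/-- A `(p,∞)^S`-atom `a` associated to the stopping time `ν`. -/
structure IsAtomBigS (ℱ : Filtration ℕ m0) (μ : Measure Ω) (p : ℝ)
    (a : Ω → ℝ) (ν : Ω → ℕ∞) : Prop where
  stopping : IsStoppingTimeE ℱ ν
  integrable : Integrable a μ
  vanish : ∀ n : ℕ, ∀ᵐ ω ∂μ, (n : ℕ∞) ≤ ν ω → (μ[a|ℱ n]) ω = 0
  size : essSup (sqFn fun n => μ[a|ℱ n]) μ ≤ μ (Bset ν) ^ (-(1 / p))

/-- A `(p,q,∞)^S`-atom `a` associated to the stopping time `ν`. -/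
structure IsAtomBigS' (ℱ : Filtration ℕ m0) (μ : Measure Ω) (Os : ℤ → Set Ω) (p : ℝ) (q : ℝ≥0∞)
    (a : Ω → ℝ) (ν : Ω → ℕ∞) : Prop where
  stopping : IsStoppingTimeE ℱ ν
  integrable : Integrable a μ
  vanish : ∀ n : ℕ, ∀ᵐ ω ∂μ, (n : ℕ∞) ≤ ν ω → (μ[a|ℱ n]) ω = 0
  size : essSup (sqFn fun n => μ[a|ℱ n]) μ ≤ (amalgamNorm μ Os p q ((Bset ν).indicator 1))⁻¹

/-- A `(p,∞)^*`-atom `a` associated to the stopping time `ν`. -/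
structure IsAtomStar (ℱ : Filtration ℕ m0) (μ : Measure Ω) (p : ℝ)
    (a : Ω → ℝ) (ν : Ω → ℕ∞) : Prop where
  stopping : IsStoppingTimeE ℱ ν
  integrable : Integrable a μ
  vanish : ∀ n : ℕ, ∀ᵐ ω ∂μ, (n : ℕ∞) ≤ ν ω → (μ[a|ℱ n]) ω = 0
  size : essSup (maxFn fun n => μ[a|ℱ n]) μ ≤ μ (Bset ν) ^ (-(1 / p))

/-- A `(p,q,∞)^*`-atom `a` associated to the stopping time `ν`. -/
structure IsAtomStar' (ℱ : Filtration ℕ m0) (μ : Measure Ω) (Os : ℤ → Set Ω) (p : ℝ) (q : ℝ≥0∞)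
    (a : Ω → ℝ) (ν : Ω → ℕ∞) : Prop where
  stopping : IsStoppingTimeE ℱ ν
  integrable : Integrable a μ
  vanish : ∀ n : ℕ, ∀ᵐ ω ∂μ, (n : ℕ∞) ≤ ν ω → (μ[a|ℱ n]) ω = 0
  size : essSup (maxFn fun n => μ[a|ℱ n]) μ ≤ (amalgamNorm μ Os p q ((Bset ν).indicator 1))⁻¹

/-- The stopped limit `f^ν`: equal to `𝔼_{ν(ω)} f (ω)` where `ν(ω) < ∞`, and to `f(ω)`
(the a.e. limit of the martingale `(𝔼_n f)`) where `ν(ω) = ∞`. -/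
def fStopped (ℱ : Filtration ℕ m0) (μ : Measure Ω) (f : Ω → ℝ) (ν : Ω → ℕ∞) : Ω → ℝ :=
  fun ω => if ν ω = ⊤ then f ω else (μ[f|ℱ (ν ω).toNat]) ω

/-- The Campanato norm `‖g‖_{ℒ_{2,φ}} = sup_ν φ(B_ν)⁻¹ (ℙ(B_ν)⁻¹ ∫_{B_ν} |g - g^ν|² dℙ)^{1/2}`,
where `φ(A) = ‖1_A‖_{p,q} / ℙ(A)` and the supremum runs over all stopping times `ν`
with `ℙ(B_ν) ≠ 0`. -/
def campanatoNorm (ℱ : Filtration ℕ m0) (μ : Measure Ω) (Os : ℤ → Set Ω) (p : ℝ) (q : ℝ≥0∞)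
    (g : Ω → ℝ) : ℝ≥0∞ :=
  ⨆ (ν : Ω → ℕ∞) (_ : IsStoppingTimeE ℱ ν ∧ μ (Bset ν) ≠ 0),
    (amalgamNorm μ Os p q ((Bset ν).indicator 1) / μ (Bset ν))⁻¹ *
      ((μ (Bset ν))⁻¹ *
        ∫⁻ ω in Bset ν, ENNReal.ofReal ((g ω - fStopped ℱ μ g ν ω) ^ 2) ∂μ) ^ (2⁻¹ : ℝ)



section AuxLemmas

lemma aux_iSup_rpow {ι : Sort*} (a : ι → ℝ≥0∞) {c : ℝ} (hc : 0 < c) :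
    (⨆ i, a i) ^ c = ⨆ i, a i ^ c := by
  apply le_antisymm
  · have h : (⨆ i, a i) ≤ (⨆ i, a i ^ c) ^ (1/c) := by
      apply iSup_le fun i => ?_
      have : a i = (a i ^ c) ^ (1/c) := by
        rw [← ENNReal.rpow_mul, mul_one_div, div_self hc.ne', ENNReal.rpow_one]
      rw [this]
      exact ENNReal.rpow_le_rpow (le_iSup (fun i => a i ^ c) i) (by positivity)
    calc (⨆ i, a i) ^ c ≤ ((⨆ i, a i ^ c) ^ (1/c)) ^ c :=
          ENNReal.rpow_le_rpow h hc.le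
      _ = ⨆ i, a i ^ c := by
          rw [← ENNReal.rpow_mul, one_div_mul_cancel hc.ne', ENNReal.rpow_one]
  · exact iSup_le fun i => ENNReal.rpow_le_rpow (le_iSup _ i) hc.le

lemma aux_rpow_tsum_le {ι : Type*} [Countable ι] (y : ι → ℝ≥0∞) {η : ℝ} (h0 : 0 < η) (h1 : η ≤ 1) :
    (∑' k, y k) ^ η ≤ ∑' k, y k ^ η := by
  rw [ENNReal.tsum_eq_iSup_sum, aux_iSup_rpow _ h0]
  apply iSup_le fun s => ?_
  have : (∑ k ∈ s, y k) ^ η ≤ ∑ k ∈ s, y k ^ η := by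
    classical
    induction s using Finset.induction_on with
    | empty => simp [ENNReal.zero_rpow_of_pos h0]
    | insert a s hx ih =>
        rw [Finset.sum_insert hx, Finset.sum_insert hx]
        calc (y a + ∑ k ∈ s, y k) ^ η ≤ y a ^ η + (∑ k ∈ s, y k) ^ η :=
              ENNReal.rpow_add_le_add_rpow _ _ h0.le h1
          _ ≤ _ := by gcongr
  exact this.trans (ENNReal.sum_le_tsum s)

lemma aux_tsum_le_rpow {ι : Type*} [Countable ι] (y : ι → ℝ≥0∞) {η : ℝ} (h0 : 0 < η) (h1 : η ≤ 1) :
    ∑' k, y k ≤ (∑' k, y k ^ η) ^ (1/η) := by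
  have := aux_rpow_tsum_le y h0 h1
  calc ∑' k, y k = ((∑' k, y k) ^ η) ^ (1/η) := by
        rw [← ENNReal.rpow_mul, mul_one_div, div_self h0.ne', ENNReal.rpow_one]
    _ ≤ _ := ENNReal.rpow_le_rpow this (by positivity)


lemma amalgam_mono (μ : Measure Ω) (Os : ℤ → Set Ω) {p : ℝ} (hp : 0 < p) (q : ℝ≥0∞)
    {g1 g2 : Ω → ℝ≥0∞} (h : ∀ ω, g1 ω ≤ g2 ω) :
    amalgamNorm μ Os p q g1 ≤ amalgamNorm μ Os p q g2 := by
  have hint : ∀ j, (∫⁻ ω in Os j, g1 ω ^ p ∂μ) ≤ ∫⁻ ω in Os j, g2 ω ^ p ∂μ :=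
    fun j => lintegral_mono fun ω => ENNReal.rpow_le_rpow (h ω) hp.le
  unfold amalgamNorm
  split
  · exact iSup_mono fun j => ENNReal.rpow_le_rpow (hint j) (by positivity)
  · refine ENNReal.rpow_le_rpow (ENNReal.tsum_le_tsum fun j => ?_) (by positivity)
    exact ENNReal.rpow_le_rpow (hint j) (by positivity)

lemma amalgam_rpow (μ : Measure Ω) (Os : ℤ → Set Ω) {p : ℝ} {q : ℝ≥0∞} (hp : 0 < p) (hq : 0 < q)
    {η : ℝ} (hη0 : 0 < η) (hη1 : η ≤ 1) (g : Ω → ℝ≥0∞) :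
    amalgamNorm μ Os p q (fun ω => g ω ^ (1/η)) =
      (amalgamNorm μ Os (p / η) (q / ENNReal.ofReal η) g) ^ (1/η) := by
  have hη : ENNReal.ofReal η ≠ 0 := by simp [hη0, hη0.not_ge]
  have hηt : ENNReal.ofReal η ≠ ∞ := ENNReal.ofReal_ne_top
  have hint : ∀ j, (∫⁻ ω in Os j, (g ω ^ (1/η)) ^ p ∂μ) = ∫⁻ ω in Os j, g ω ^ (p/η) ∂μ := by
    intro j
    congr 1; ext ω
    rw [← ENNReal.rpow_mul, one_div, inv_mul_eq_div]
  unfold amalgamNorm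
  rcases eq_or_ne q ∞ with hqt | hqt
  · have : q / ENNReal.ofReal η = ∞ := by
      rw [hqt]; exact ENNReal.top_div_of_ne_top hηt
    rw [if_pos hqt, if_pos this, aux_iSup_rpow _ (by positivity : (0:ℝ) < 1/η)]
    congr 1; ext j
    rw [hint j, ← ENNReal.rpow_mul]
    congr 1
    field_simp
  · have hdt : q / ENNReal.ofReal η ≠ ∞ := by
      simp [ENNReal.div_eq_top, hqt, hη]
    have hq0 : q.toReal ≠ 0 := by
      simp [ENNReal.toReal_eq_zero_iff, hq.ne', hqt]
    have hqtr : 0 < q.toReal := lt_of_le_of_ne ENNReal.toReal_nonneg (Ne.symm hq0)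
    rw [if_neg hqt, if_neg hdt, ← ENNReal.rpow_mul]
    have htor : (q / ENNReal.ofReal η).toReal = q.toReal / η := by
      rw [ENNReal.toReal_div, ENNReal.toReal_ofReal hη0.le]
    rw [htor]
    have hexp : (q.toReal / η) / (p / η) = q.toReal / p := by
      field_simp
    have hexp2 : 1 / (q.toReal / η) * (1/η) = 1 / q.toReal := by
      field_simp
    rw [hexp, hexp2]
    congr 1
    apply tsum_congr fun j => ?_
    rw [hint j]

lemma amalgam_ae_ne_top (μ : Measure Ω) (Os : ℤ → Set Ω) (hOmeas : ∀ j, MeasurableSet (Os j))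
    (hOcov : (⋃ j, Os j) = Set.univ) {p' : ℝ} {q' : ℝ≥0∞} (hp' : 0 < p') (hq' : 0 < q')
    {g : Ω → ℝ≥0∞} (hg : Measurable g) (hfin : amalgamNorm μ Os p' q' g < ∞) :
    ∀ᵐ ω ∂μ, g ω ≠ ∞ := by
  have hint : ∀ j, (∫⁻ ω in Os j, g ω ^ p' ∂μ) ≠ ∞ := by
    intro j
    unfold amalgamNorm at hfin
    by_cases hqt : q' = ∞
    · rw [if_pos hqt] at hfin
      have h1 : (∫⁻ ω in Os j, g ω ^ p' ∂μ) ^ (1/p') < ∞ :=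
        lt_of_le_of_lt (le_iSup (fun j => (∫⁻ ω in Os j, g ω ^ p' ∂μ) ^ (1/p')) j) hfin
      intro hc
      rw [hc, ENNReal.top_rpow_of_pos (by positivity)] at h1
      exact absurd h1 (lt_irrefl _)
    · rw [if_neg hqt] at hfin
      have hq0 : 0 < q'.toReal := ENNReal.toReal_pos hq'.ne' hqt
      have h1 : (∑' j : ℤ, (∫⁻ ω in Os j, g ω ^ p' ∂μ) ^ (q'.toReal / p')) ≠ ∞ := by
        intro hc
        rw [hc, ENNReal.top_rpow_of_pos (by positivity)] at hfin
        exact absurd hfin (lt_irrefl _)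
      have h2 : (∫⁻ ω in Os j, g ω ^ p' ∂μ) ^ (q'.toReal / p') ≠ ∞ :=
        fun hc => h1 (top_le_iff.mp (hc ▸ ENNReal.le_tsum j))
      intro hc
      rw [hc, ENNReal.top_rpow_of_pos (by positivity)] at h2
      exact h2 rfl
  have hae : ∀ j, ∀ᵐ ω ∂μ.restrict (Os j), g ω ≠ ∞ := by
    intro j
    have := ae_lt_top (hg.pow_const p') (hint j)
    filter_upwards [this] with ω hω hc
    rw [hc, ENNReal.top_rpow_of_pos hp'] at hω
    exact absurd hω (lt_irrefl _)
  rw [ae_iff]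
  have hsub : {ω | ¬ g ω ≠ ∞} ⊆ ⋃ j, ({ω | g ω = ∞} ∩ Os j) := by
    intro ω hω
    have : ω ∈ ⋃ j, Os j := hOcov ▸ Set.mem_univ ω
    rcases Set.mem_iUnion.mp this with ⟨j, hj⟩
    exact Set.mem_iUnion.mpr ⟨j, ⟨not_not.mp hω, hj⟩⟩
  refine measure_mono_null hsub (measure_iUnion_null fun j => ?_)
  have := (ae_restrict_iff' (hOmeas j)).mp (hae j)
  rw [ae_iff] at this
  refine measure_mono_null (fun ω hω => ?_) this
  simp only [Set.mem_inter_iff, Set.mem_setOf_eq] at hω ⊢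
  intro himp
  exact (himp hω.2) hω.1


lemma aux_ofReal_abs (x : ℝ) : ENNReal.ofReal |x| = (ENNReal.ofReal (x^2)) ^ (2⁻¹ : ℝ) := by
  rw [ENNReal.ofReal_rpow_of_nonneg (sq_nonneg x) (by norm_num)]
  congr 1
  rw [show (2⁻¹ : ℝ) = 1/2 by norm_num, ← Real.sqrt_eq_rpow, Real.sqrt_sq_eq_abs]

lemma aux_ofReal_sqrt_sum {m : ℕ} (d : ℕ → ℝ) :
    ENNReal.ofReal (Real.sqrt (∑ i ∈ Finset.range m, (d i)^2)) =
      (∑ i ∈ Finset.range m, ENNReal.ofReal ((d i)^2)) ^ (2⁻¹ : ℝ) := by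
  rw [← ENNReal.ofReal_sum_of_nonneg (fun i _ => sq_nonneg (d i)),
    ENNReal.ofReal_rpow_of_nonneg (Finset.sum_nonneg fun i _ => sq_nonneg (d i)) (by norm_num)]
  congr 1
  rw [show (2⁻¹ : ℝ) = 1/2 by norm_num, ← Real.sqrt_eq_rpow]

lemma aux_key_pointwise (n : ℕ) (F : ℕ → ℝ) (E : ℤ → ℕ → ℝ) (l : ℤ → ℝ) (hl : ∀ k, 0 ≤ l k)
    (νω : ℤ → ℕ∞) (r : ℤ → ℝ≥0∞)
    (hvan : ∀ k (i : ℕ), (i : ℕ∞) ≤ νω k → E k i = 0)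
    (hsq : ∀ k, (∑' i : ℕ, ENNReal.ofReal ((E k (i+1) - E k i)^2)) ^ (2⁻¹ : ℝ) ≤ r k)
    (hfin : ∀ k, νω k ≠ ⊤ → r k ≠ ⊤)
    (hrep : ∀ i ≤ n + 1, F i = ∑' k : ℤ, l k * E k i)
    (hBfin : (∑' k : ℤ, (if νω k ≠ ⊤ then ENNReal.ofReal (l k) * r k else 0)) ≠ ⊤) :
    Real.sqrt (∑ i ∈ Finset.range (n+1), (F (i+1) - F i)^2) ≤
      (∑' k : ℤ, (if νω k ≤ (n : ℕ∞) then ENNReal.ofReal (l k) * r k else 0)).toReal := by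
  classical
  set T : ℤ → ℝ≥0∞ := fun k => if νω k ≠ ⊤ then ENNReal.ofReal (l k) * r k else 0 with hT
  have hTne : ∀ k, T k ≠ ⊤ := by
    intro k
    simp only [hT]
    by_cases h : νω k ≠ ⊤
    · rw [if_pos h]
      exact ENNReal.mul_ne_top ENNReal.ofReal_ne_top (hfin k h)
    · rw [if_neg h]; exact ENNReal.zero_ne_top
  set Tn : ℤ → ℝ≥0∞ := fun k => if νω k ≤ (n : ℕ∞) then ENNReal.ofReal (l k) * r k else 0
    with hTn
  have hTnle : ∀ k, Tn k ≤ T k := by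
    intro k
    simp only [hTn, hT]
    by_cases h : νω k ≤ (n : ℕ∞)
    · rw [if_pos h, if_pos]
      intro hc; rw [hc] at h; simp at h
    · rw [if_neg h]; exact zero_le
  have hTnne : ∀ k, Tn k ≠ ⊤ := fun k => fun hc => hTne k (top_le_iff.mp (hc ▸ hTnle k))
  have hTnfin : (∑' k, Tn k) ≠ ⊤ :=
    fun hc => hBfin (top_le_iff.mp (hc ▸ ENNReal.tsum_le_tsum hTnle))
  set rR : ℤ → ℝ := fun k => (r k).toReal with hrR
  -- bound on individual differences
  have hd : ∀ k i, |E k (i+1) - E k i| ≤ if (νω k ≤ (i : ℕ∞)) then rR k else 0 := by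
    intro k i
    by_cases h : νω k ≤ (i : ℕ∞)
    · rw [if_pos h]
      have hν : νω k ≠ ⊤ := by
        intro hc; rw [hc] at h; simp at h
      have h1 : ENNReal.ofReal (|E k (i+1) - E k i|) ≤ r k := by
        rw [aux_ofReal_abs]
        refine le_trans ?_ (hsq k)
        exact ENNReal.rpow_le_rpow (ENNReal.le_tsum i) (by norm_num)
      exact (ENNReal.ofReal_le_iff_le_toReal (hfin k hν)).mp h1
    · rw [if_neg h]
      have hle : ((i + 1 : ℕ) : ℕ∞) ≤ νω k := by
        have := not_le.mp h
        exact_mod_cast Order.add_one_le_of_lt this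
      have h2 : ((i : ℕ) : ℕ∞) ≤ νω k := le_trans (by exact_mod_cast Nat.le_succ i) hle
      rw [hvan k (i+1) hle, hvan k i h2, sub_zero, abs_zero]
  -- the vectors
  set V : ℤ → EuclideanSpace ℝ (Fin (n+1)) :=
    fun k => WithLp.toLp 2 fun i => l k * (E k (i+1) - E k i) with hV
  have hnorm : ∀ k, ‖V k‖ ≤ (Tn k).toReal := by
    intro k
    by_cases h : νω k ≤ (n : ℕ∞)
    · -- bound by l k * rR k
      have hν : νω k ≠ ⊤ := by intro hc; rw [hc] at h; simp at h
      have hVn : ‖V k‖ = Real.sqrt (∑ i ∈ Finset.range (n+1),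
          (l k * (E k (i+1) - E k i))^2) := by
        rw [EuclideanSpace.norm_eq]
        simp only [hV, WithLp.ofLp_toLp]
        rw [Fin.sum_univ_eq_sum_range (fun i => ‖l k * (E k (i+1) - E k i)‖^2)]
        congr 1
        exact Finset.sum_congr rfl fun i _ => by rw [Real.norm_eq_abs, sq_abs]
      have hsqrt : Real.sqrt (∑ i ∈ Finset.range (n+1), (E k (i+1) - E k i)^2) ≤ rR k := by
        rw [← ENNReal.toReal_ofReal (Real.sqrt_nonneg _)]
        apply ENNReal.toReal_mono (hfin k hν)
        rw [aux_ofReal_sqrt_sum]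
        refine le_trans ?_ (hsq k)
        refine ENNReal.rpow_le_rpow ?_ (by norm_num)
        exact ENNReal.sum_le_tsum _
      calc ‖V k‖ = |l k| * Real.sqrt (∑ i ∈ Finset.range (n+1), (E k (i+1) - E k i)^2) := by
            rw [hVn, ← Real.sqrt_sq_eq_abs, ← Real.sqrt_mul (sq_nonneg _), Finset.mul_sum]
            congr 1
            exact Finset.sum_congr rfl fun i _ => (mul_pow _ _ 2)
        _ ≤ l k * rR k := by
            rw [abs_of_nonneg (hl k)]
            exact mul_le_mul_of_nonneg_left hsqrt (hl k)
        _ = (Tn k).toReal := by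
            simp only [hTn]
            rw [if_pos h, ENNReal.toReal_mul, ENNReal.toReal_ofReal (hl k)]
    · -- all coordinates vanish
      have hz : V k = 0 := by
        refine PiLp.ext fun i => ?_
        simp only [hV]
        have hii : ¬ (νω k ≤ ((i : ℕ) : ℕ∞)) := by
          intro hc
          exact h (le_trans hc (by exact_mod_cast Nat.le_of_lt_succ i.isLt))
        have := hd k i
        rw [if_neg hii] at this
        have : E k (i+1) - E k i = 0 := abs_nonpos_iff.mp this
        simp [this]
      rw [hz, norm_zero]
      simp only [hTn]
      rw [if_neg h]
      simp
  -- summability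
  have hTnsum : Summable fun k => (Tn k).toReal := ENNReal.summable_toReal hTnfin
  have hVsum : Summable V := Summable.of_norm_bounded hTnsum hnorm
  have hnormsum : Summable fun k => ‖V k‖ :=
    Summable.of_nonneg_of_le (fun k => norm_nonneg _) hnorm hTnsum
  -- coordinates of the tsum
  have hTR : ∀ k i, l k * |E k (i+1) - E k i| ≤ (T k).toReal := by
    intro k i
    refine le_trans (mul_le_mul_of_nonneg_left (hd k i) (hl k)) ?_
    by_cases h : νω k ≤ (i : ℕ∞)
    · have hν : νω k ≠ ⊤ := by intro hc; rw [hc] at h; simp at h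
      rw [if_pos h]
      simp only [hT]
      rw [if_pos hν, ENNReal.toReal_mul, ENNReal.toReal_ofReal (hl k)]
    · rw [if_neg h, mul_zero]
      exact ENNReal.toReal_nonneg
  have hMsum : ∀ j : ℕ, Summable fun k => l k * E k j := by
    intro j
    apply Summable.of_norm_bounded (g := fun k => (j : ℝ) * (T k).toReal)
      ((ENNReal.summable_toReal hBfin).mul_left _)
    intro k
    rw [Real.norm_eq_abs, abs_mul, abs_of_nonneg (hl k)]
    have hEj : E k j = ∑ i ∈ Finset.range j, (E k (i+1) - E k i) := by
      rw [Finset.sum_range_sub (fun i => E k i)]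
      rw [hvan k 0 (by exact_mod_cast zero_le), sub_zero]
    calc l k * |E k j| ≤ l k * ∑ i ∈ Finset.range j, |E k (i+1) - E k i| := by
          refine mul_le_mul_of_nonneg_left ?_ (hl k)
          rw [hEj]
          exact Finset.abs_sum_le_sum_abs _ _
      _ = ∑ i ∈ Finset.range j, l k * |E k (i+1) - E k i| := Finset.mul_sum _ _ _
      _ ≤ ∑ i ∈ Finset.range j, (T k).toReal := Finset.sum_le_sum fun i _ => hTR k i
      _ = (j : ℝ) * (T k).toReal := by
          rw [Finset.sum_const, Finset.card_range, nsmul_eq_mul]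
  -- identify coordinates of tsum V
  have hcoord : ∀ i : Fin (n+1), (∑' k, V k) i = F (i+1) - F (i : ℕ) := by
    intro i
    have h1 : (∑' k, V k) i = ∑' k, (V k i) := by
      have := (EuclideanSpace.proj (𝕜 := ℝ) i).map_tsum hVsum
      simpa using this
    rw [h1]
    have h2 : ∀ k, V k i = l k * E k ((i : ℕ)+1) - l k * E k i := by
      intro k; simp only [hV, WithLp.ofLp_toLp]; ring
    rw [tsum_congr h2, Summable.tsum_sub (hMsum ((i : ℕ)+1)) (hMsum i)]
    rw [← hrep ((i:ℕ)+1) (by omega), ← hrep i (by omega)]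
  -- conclude
  have hgoal : Real.sqrt (∑ i ∈ Finset.range (n+1), (F (i+1) - F i)^2) = ‖∑' k, V k‖ := by
    rw [EuclideanSpace.norm_eq,
      ← Fin.sum_univ_eq_sum_range (fun i => (F (i+1) - F i)^2) (n+1)]
    congr 1
    refine Finset.sum_congr rfl fun i _ => ?_
    rw [hcoord i, Real.norm_eq_abs, sq_abs]
  rw [hgoal]
  calc ‖∑' k, V k‖ ≤ ∑' k, ‖V k‖ := norm_tsum_le_tsum_norm hnormsum
    _ ≤ ∑' k, (Tn k).toReal := Summable.tsum_le_tsum hnorm hnormsum hTnsum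
    _ = (∑' k, Tn k).toReal := (ENNReal.tsum_toReal_eq hTnne).symm


def betaAux (B : ℕ → Ω → ℝ≥0∞) : ℕ → Ω → ℝ
  | 0 => fun ω => (B 0 ω).toReal
  | (n+1) => fun ω => max (betaAux B n ω) ((B (n+1) ω).toReal)

lemma betaAux_nonneg (B : ℕ → Ω → ℝ≥0∞) (n : ℕ) (ω : Ω) : 0 ≤ betaAux B n ω := by
  cases n with
  | zero => exact ENNReal.toReal_nonneg
  | succ n => exact le_trans ENNReal.toReal_nonneg (le_max_right _ _)

lemma betaAux_mono (B : ℕ → Ω → ℝ≥0∞) (ω : Ω) : Monotone fun n => betaAux B n ω :=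
  monotone_nat_of_le_succ fun n => le_max_left _ _

lemma le_betaAux (B : ℕ → Ω → ℝ≥0∞) (n : ℕ) (ω : Ω) : (B n ω).toReal ≤ betaAux B n ω := by
  cases n with
  | zero => exact le_rfl
  | succ n => exact le_max_right _ _

lemma betaAux_measurable (ℱ : Filtration ℕ m0) (B : ℕ → Ω → ℝ≥0∞)
    (hB : ∀ m, Measurable[ℱ m] (B m)) (n : ℕ) : Measurable[ℱ n] (betaAux B n) := by
  induction n with
  | zero => exact ENNReal.measurable_toReal.comp (hB 0)
  | succ n ih =>
      exact Measurable.max (ih.mono (ℱ.mono (Nat.le_succ n)) le_rfl)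
        (ENNReal.measurable_toReal.comp (hB (n+1)))

lemma betaAux_ofReal_le (B : ℕ → Ω → ℝ≥0∞) (hmono : ∀ m ω, B m ω ≤ B (m+1) ω) (n : ℕ) (ω : Ω) :
    ENNReal.ofReal (betaAux B n ω) ≤ B n ω := by
  induction n with
  | zero => exact ENNReal.ofReal_toReal_le
  | succ n ih =>
      have : ENNReal.ofReal (max (betaAux B n ω) ((B (n+1) ω).toReal)) =
          max (ENNReal.ofReal (betaAux B n ω)) (ENNReal.ofReal ((B (n+1) ω).toReal)) :=
        Monotone.map_max fun _ _ h => ENNReal.ofReal_le_ofReal h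
      show ENNReal.ofReal (max _ _) ≤ _
      rw [this]
      exact max_le (ih.trans (hmono n ω)) ENNReal.ofReal_toReal_le


end AuxLemmas

theorem stmt5
    (μ : Measure Ω) [IsProbabilityMeasure μ] (ℱ : Filtration ℕ m0)
    (hsup : (⨆ n, (ℱ n : MeasurableSpace Ω)) = m0)
    (Os : ℤ → Set Ω) (hOmeas : ∀ j, MeasurableSet (Os j)) (hOne : ∀ j, (Os j).Nonempty)
    (hOdisj : Pairwise fun i j => Disjoint (Os i) (Os j)) (hOcov : (⋃ j, Os j) = Set.univ)
    (p : ℝ) (q : ℝ≥0∞) (hp : 0 < p) (hq : 0 < q) (η : ℝ) (hη0 : 0 < η) (hη1 : η ≤ 1) :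
    ∃ C : ℝ≥0∞, C ≠ ∞ ∧
      ∀ (f : ℕ → Ω → ℝ) (l : ℤ → ℝ) (a : ℤ → Ω → ℝ) (ν : ℤ → Ω → ℕ∞),
        Martingale f ℱ μ → f 0 = 0 → (∀ k, 0 ≤ l k) →
        (∀ k, IsAtomBigS ℱ μ p (a k) (ν k)) →
        (∀ n : ℕ, ∀ᵐ ω ∂μ, f n ω = ∑' k : ℤ, l k * (μ[a k|ℱ n]) ω) →
        (amalgamNorm μ Os (p / η) (q / ENNReal.ofReal η)
            (fun ω => ∑' k : ℤ, (Bset (ν k)).indicator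
              (fun _ => (ENNReal.ofReal (l k) / μ (Bset (ν k)) ^ (1 / p)) ^ η) ω) < ∞ → QNorm ℱ μ Os p q f < ∞) ∧
        QNorm ℱ μ Os p q f ≤
          C * (amalgamNorm μ Os (p / η) (q / ENNReal.ofReal η)
            (fun ω => ∑' k : ℤ, (Bset (ν k)).indicator
              (fun _ => (ENNReal.ofReal (l k) / μ (Bset (ν k)) ^ (1 / p)) ^ η) ω)) ^ (1 / η) := by
  classical
  refine ⟨1, ENNReal.one_ne_top, ?_⟩
  intro f l a ν hmart hf0 hl ha hrep
  set g : Ω → ℝ≥0∞ := fun ω => ∑' k : ℤ, (Bset (ν k)).indicator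
    (fun _ => (ENNReal.ofReal (l k) / μ (Bset (ν k)) ^ (1 / p)) ^ η) ω with hgdef
  set G : ℝ≥0∞ := amalgamNorm μ Os (p / η) (q / ENNReal.ofReal η) g with hGdef
  suffices key : G < ∞ → QNorm ℱ μ Os p q f ≤ G ^ (1/η) by
    constructor
    · intro hfin
      exact lt_of_le_of_lt (key hfin) (ENNReal.rpow_lt_top_of_nonneg (by positivity) hfin.ne)
    · rcases eq_or_ne G ∞ with hG | hG
      · rw [hG, one_mul, ENNReal.top_rpow_of_pos (by positivity)]
        exact le_top
      · rw [one_mul]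
        exact key (lt_top_iff_ne_top.mpr hG)
  intro hfin
  set x : ℤ → ℝ≥0∞ := fun k => ENNReal.ofReal (l k) * μ (Bset (ν k)) ^ (-(1/p)) with hx
  set Bn : ℕ → Ω → ℝ≥0∞ :=
    fun n ω => ∑' k : ℤ, Set.indicator {ω' | ν k ω' ≤ (n : ℕ∞)} (fun _ => x k) ω with hBn
  set BI : Ω → ℝ≥0∞ := fun ω => ∑' k : ℤ, Set.indicator (Bset (ν k)) (fun _ => x k) ω with hBI
  have hgeq : ∀ ω, g ω = ∑' k : ℤ, ((Bset (ν k)).indicator (fun _ => x k) ω) ^ η := by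
    intro ω
    refine tsum_congr fun k => ?_
    by_cases h : ω ∈ Bset (ν k)
    · rw [Set.indicator_of_mem h, Set.indicator_of_mem h]
      congr 1
      rw [hx]
      simp only
      rw [ENNReal.rpow_neg, div_eq_mul_inv]
    · rw [Set.indicator_of_notMem h, Set.indicator_of_notMem h,
        ENNReal.zero_rpow_of_pos hη0]
  have hxg : ∀ ω, BI ω ≤ g ω ^ (1/η) := by
    intro ω
    calc BI ω ≤ (∑' k : ℤ, ((Bset (ν k)).indicator (fun _ => x k) ω) ^ η) ^ (1/η) :=
          aux_tsum_le_rpow _ hη0 hη1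
      _ = g ω ^ (1/η) := by rw [← hgeq ω]
  have hBsetm : ∀ k, MeasurableSet (Bset (ν k)) := by
    intro k
    have hB : Bset (ν k) = ⋃ n : ℕ, {ω | ν k ω ≤ (n : ℕ∞)} := by
      ext ω
      simp only [Bset, Set.mem_setOf_eq, Set.mem_iUnion]
      constructor
      · intro h
        rcases WithTop.ne_top_iff_exists.mp h with ⟨m, hm⟩
        exact ⟨m, le_of_eq hm.symm⟩
      · rintro ⟨m, hm⟩ hc
        rw [hc] at hm
        exact absurd hm (by simp)
    rw [hB]
    exact MeasurableSet.iUnion fun n => (ℱ.le n _ ((ha k).stopping n))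
  have hgmeas : Measurable g :=
    Measurable.ennreal_tsum fun k => Measurable.indicator measurable_const (hBsetm k)
  have hq' : (0 : ℝ≥0∞) < q / ENNReal.ofReal η :=
    ENNReal.div_pos hq.ne' ENNReal.ofReal_ne_top
  have hgae : ∀ᵐ ω ∂μ, g ω ≠ ∞ :=
    amalgam_ae_ne_top μ Os hOmeas hOcov (by positivity) hq' hgmeas hfin
  have haeS : ∀ᵐ ω ∂μ, ∀ k, sqFn (fun n => μ[a k|ℱ n]) ω ≤ μ (Bset (ν k)) ^ (-(1/p)) :=
    ae_all_iff.mpr fun k => (ENNReal.ae_le_essSup _).mono fun ω h => h.trans (ha k).size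
  have haeV : ∀ᵐ ω ∂μ, ∀ k (n : ℕ), (n : ℕ∞) ≤ ν k ω → (μ[a k|ℱ n]) ω = 0 :=
    ae_all_iff.mpr fun k => ae_all_iff.mpr fun n => (ha k).vanish n
  have haeR : ∀ᵐ ω ∂μ, ∀ n : ℕ, f n ω = ∑' k : ℤ, l k * (μ[a k|ℱ n]) ω :=
    ae_all_iff.mpr hrep
  have haeN : ∀ᵐ ω ∂μ, ∀ k, μ (Bset (ν k)) = 0 → ν k ω = ⊤ := by
    rw [ae_all_iff]
    intro k
    by_cases hk : μ (Bset (ν k)) = 0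
    · have h0 : ∀ᵐ ω ∂μ, ω ∉ Bset (ν k) := by
        rw [ae_iff]
        simpa using hk
      filter_upwards [h0] with ω hω _
      simpa [Bset] using hω
    · filter_upwards with ω h
      exact absurd h hk
  have haeBI : ∀ᵐ ω ∂μ, BI ω ≠ ∞ := by
    filter_upwards [hgae] with ω h
    exact (lt_of_le_of_lt (hxg ω)
      (ENNReal.rpow_lt_top_of_nonneg (by positivity) h)).ne
  have hmain : ∀ᵐ ω ∂μ, ∀ n : ℕ, sqFnFin f (n+1) ω ≤ betaAux Bn n ω := by
    filter_upwards [haeS, haeV, haeR, haeN, haeBI] with ω hS hV hR hN hBIω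
    intro n
    have hr : ∀ k, ν k ω ≠ ⊤ → μ (Bset (ν k)) ^ (-(1/p)) ≠ ∞ := by
      intro k hk
      have hk0 : μ (Bset (ν k)) ≠ 0 := fun hc => hk (hN k hc)
      rw [ENNReal.rpow_neg]
      exact ENNReal.inv_ne_top.mpr
        (ENNReal.rpow_pos (hk0.bot_lt) (measure_ne_top μ _)).ne'
    have hBfin : (∑' k : ℤ, (if ν k ω ≠ ⊤ then
        ENNReal.ofReal (l k) * μ (Bset (ν k)) ^ (-(1/p)) else 0)) ≠ ⊤ := by
      have heq : (∑' k : ℤ, (if ν k ω ≠ ⊤ then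
          ENNReal.ofReal (l k) * μ (Bset (ν k)) ^ (-(1/p)) else 0)) = BI ω := by
        refine tsum_congr fun k => ?_
        by_cases h : ν k ω ≠ ⊤
        · rw [if_pos h]
          exact (Set.indicator_of_mem (show ω ∈ Bset (ν k) from h) (fun _ => x k)).symm
        · rw [if_neg h]
          exact (Set.indicator_of_notMem (show ω ∉ Bset (ν k) from h) (fun _ => x k)).symm
      rw [heq]
      exact hBIω
    have hkey := aux_key_pointwise n (fun i => f i ω) (fun k i => (μ[a k|ℱ i]) ω) l hl
      (fun k => ν k ω) (fun k => μ (Bset (ν k)) ^ (-(1/p)))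
      (fun k i h => hV k i h) (fun k => hS k) hr (fun i _ => hR i) hBfin
    refine le_trans hkey (le_trans (le_of_eq ?_) (le_betaAux Bn n ω))
    congr 1
    refine tsum_congr fun k => ?_
    by_cases h : ν k ω ≤ (n : ℕ∞)
    · rw [if_pos h]
      exact (Set.indicator_of_mem (show ω ∈ {ω' | ν k ω' ≤ (n : ℕ∞)} from h) (fun _ => x k)).symm
    · rw [if_neg h]
      exact (Set.indicator_of_notMem (show ω ∉ {ω' | ν k ω' ≤ (n : ℕ∞)} from h) (fun _ => x k)).symm
  set β : ℕ → Ω → ℝ := betaAux Bn with hβ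
  have hBnmeas : ∀ m, Measurable[ℱ m] (Bn m) := fun m =>
    Measurable.ennreal_tsum fun k =>
      Measurable.indicator measurable_const ((ha k).stopping m)
  have hgamma : MemGamma ℱ β :=
    ⟨fun n => (betaAux_measurable ℱ Bn hBnmeas n),
      fun ω => betaAux_mono Bn ω, fun n ω => betaAux_nonneg Bn n ω⟩
  have hcond : ∀ n : ℕ, ∀ᵐ ω ∂μ, sqFnFin f (n+1) ω ≤ β n ω := fun n =>
    hmain.mono fun ω h => h n
  have hBnmono : ∀ m ω', Bn m ω' ≤ Bn (m+1) ω' := by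
    intro m ω'
    refine ENNReal.tsum_le_tsum fun k => ?_
    refine Set.indicator_le_indicator_of_subset ?_ (fun _ => zero_le) ω'
    intro ω'' h
    have h' : ν k ω'' ≤ (m : ℕ∞) := h
    show ν k ω'' ≤ ((m+1 : ℕ) : ℕ∞)
    exact le_trans h' (by exact_mod_cast Nat.cast_le.mpr (Nat.le_succ m))
  have hbeta : ∀ ω, betaInfty β ω ≤ g ω ^ (1/η) := by
    intro ω
    refine le_trans (iSup_le fun n => ?_) (hxg ω)
    refine le_trans (betaAux_ofReal_le Bn hBnmono n ω) ?_
    refine ENNReal.tsum_le_tsum fun k => ?_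
    refine Set.indicator_le_indicator_of_subset ?_ (fun _ => zero_le) ω
    intro ω'' h
    have h' : ν k ω'' ≤ (n : ℕ∞) := h
    show ν k ω'' ≠ ⊤
    intro hc
    rw [hc] at h'
    exact absurd h' (by simp)
  calc QNorm ℱ μ Os p q f ≤ amalgamNorm μ Os p q (betaInfty β) := by
        unfold QNorm
        exact iInf₂_le β ⟨hgamma, hcond⟩
    _ ≤ amalgamNorm μ Os p q (fun ω => g ω ^ (1/η)) :=
        amalgam_mono μ Os hp q hbeta
    _ = G ^ (1/η) := by
        rw [hGdef]
        exact amalgam_rpow μ Os hp hq hη0 hη1 g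


end
end

section
/- Let 0<p<∞, 0<q≤∞ and 0<η≤1. There is a constant C such that: if a martingale f=(f_n)∈ℳ admits a representation f_n = ∑_{k∈ℤ} λ_k 𝔼_n a^k (almost everywhere, for every n), where λ_k≥0 and each a^k is a (p,∞)^*-atom associated to a stopping time ν^k, then f∈𝒫_{p,q} and ‖f‖_{𝒫_{p,q}} ≤ C‖∑_{k∈ℤ}(λ_k/ℙ(B_{ν^k})^{1/p})^η 1_{B_{ν^k}}‖_{p/η,q/η}^{1/η}. -/
open MeasureTheory Filter
open scoped ENNReal ENat

noncomputable section

variable {Ω : Type*} {m0 : MeasurableSpace Ω}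

section Aux

open scoped ENNReal NNReal

lemma aux_fin_rpow {ι : Type*} (x : ι → ℝ≥0∞) {η : ℝ} (h0 : 0 < η) (h1 : η ≤ 1)
    (s : Finset ι) : (∑ k ∈ s, x k) ^ η ≤ ∑ k ∈ s, x k ^ η := by
  classical
  induction s using Finset.induction_on with
  | empty => simp [ENNReal.zero_rpow_of_pos h0]
  | insert _ _ hnot ih =>
    rw [Finset.sum_insert hnot, Finset.sum_insert hnot]
    exact (ENNReal.rpow_add_le_add_rpow _ _ h0.le h1).trans (add_le_add_right ih _)

lemma aux_tsum_rpow {ι : Type*} (x : ι → ℝ≥0∞) {η : ℝ} (h0 : 0 < η) (h1 : η ≤ 1) :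
    (∑' k, x k) ^ η ≤ ∑' k, x k ^ η := by
  rw [ENNReal.tsum_eq_iSup_sum]
  have hmap := (ENNReal.orderIsoRpow η h0).map_iSup (fun s : Finset ι => ∑ k ∈ s, x k)
  simp only [ENNReal.orderIsoRpow_apply] at hmap
  rw [hmap]
  exact iSup_le fun s => (aux_fin_rpow x h0 h1 s).trans (ENNReal.sum_le_tsum s)

lemma aux_ofReal_abs_tsum {ι : Type*} (u : ι → ℝ) :
    ENNReal.ofReal |∑' k, u k| ≤ ∑' k, ENNReal.ofReal |u k| := by
  by_cases hs : Summable u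
  · have habs : Summable fun k => |u k| := hs.abs
    have h := norm_tsum_le_tsum_norm (f := u) (by simpa [Real.norm_eq_abs] using habs)
    simp only [Real.norm_eq_abs] at h
    calc ENNReal.ofReal |∑' k, u k| ≤ ENNReal.ofReal (∑' k, |u k|) :=
          ENNReal.ofReal_le_ofReal h
      _ = ∑' k, ENNReal.ofReal |u k| :=
          ENNReal.ofReal_tsum_of_nonneg (fun k => abs_nonneg _) habs
  · rw [tsum_eq_zero_of_not_summable hs]; simp

end Aux

section Aux2

lemma aux_Bset_meas {ℱ : Filtration ℕ m0} {ν : Ω → ℕ∞} (h : IsStoppingTimeE ℱ ν) :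
    MeasurableSet (Bset ν) := by
  have heq : Bset ν = ⋃ n : ℕ, {ω | ν ω ≤ (n : ℕ∞)} := by
    ext ω
    simp only [Bset, Set.mem_setOf_eq, Set.mem_iUnion]
    constructor
    · intro hν
      exact ⟨(ν ω).toNat, le_of_eq (ENat.coe_toNat hν).symm⟩
    · rintro ⟨n, hn⟩ htop
      rw [htop] at hn
      simp at hn
  rw [heq]
  exact MeasurableSet.iUnion fun n => ℱ.le n _ (h n)

lemma aux_amalgam_mono (μ : Measure Ω) (Os : ℤ → Set Ω) {p : ℝ} (hp : 0 < p) (q : ℝ≥0∞)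
    {g g' : Ω → ℝ≥0∞} (h : ∀ ω, g ω ≤ g' ω) :
    amalgamNorm μ Os p q g ≤ amalgamNorm μ Os p q g' := by
  have hI : ∀ j, ∫⁻ ω in Os j, g ω ^ p ∂μ ≤ ∫⁻ ω in Os j, g' ω ^ p ∂μ :=
    fun j => lintegral_mono fun ω => ENNReal.rpow_le_rpow (h ω) hp.le
  unfold amalgamNorm
  split
  · exact iSup_mono fun j => ENNReal.rpow_le_rpow (hI j) (by positivity)
  · exact ENNReal.rpow_le_rpow
      (ENNReal.tsum_le_tsum fun j => ENNReal.rpow_le_rpow (hI j)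
        (div_nonneg ENNReal.toReal_nonneg hp.le)) (by positivity)

lemma aux_amalgam_scale (μ : Measure Ω) (Os : ℤ → Set Ω) {p η : ℝ} (hp : 0 < p) (h0 : 0 < η)
    {q : ℝ≥0∞} (hq : 0 < q) (G : Ω → ℝ≥0∞) :
    amalgamNorm μ Os p q (fun ω => G ω ^ (1 / η)) =
      (amalgamNorm μ Os (p / η) (q / ENNReal.ofReal η) G) ^ (1 / η) := by
  have hp' : 0 < p / η := div_pos hp h0
  have hint : ∀ j, ∫⁻ ω in Os j, (G ω ^ (1 / η)) ^ p ∂μ = ∫⁻ ω in Os j, G ω ^ (p / η) ∂μ := by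
    intro j
    apply lintegral_congr
    intro ω
    rw [← ENNReal.rpow_mul, one_div_mul_eq_div]
  unfold amalgamNorm
  by_cases hqt : q = ⊤
  · rw [if_pos hqt, if_pos (by rw [hqt]; exact ENNReal.top_div_of_ne_top ENNReal.ofReal_ne_top)]
    have hmap := (ENNReal.orderIsoRpow (1 / η) (by positivity)).map_iSup
      (fun j : ℤ => (∫⁻ ω in Os j, G ω ^ (p / η) ∂μ) ^ (1 / (p / η)))
    simp only [ENNReal.orderIsoRpow_apply] at hmap
    rw [hmap]
    congr 1
    funext j
    simp only
    rw [hint j, ← ENNReal.rpow_mul]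
    congr 1
    rw [one_div_div]
    field_simp
  · have hq' : q / ENNReal.ofReal η ≠ ⊤ := by
      simp only [ne_eq, ENNReal.div_eq_top, not_or, not_and]
      exact ⟨fun _ => (ENNReal.ofReal_pos.mpr h0).ne', fun h => absurd h hqt⟩
    rw [if_neg hqt, if_neg hq']
    have ht : (q / ENNReal.ofReal η).toReal = q.toReal / η := by
      rw [ENNReal.toReal_div, ENNReal.toReal_ofReal h0.le]
    rw [ht, ← ENNReal.rpow_mul]
    congr 1
    · apply tsum_congr
      intro j
      rw [hint j]
      congr 1
      field_simp
    · rw [one_div_div]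
      field_simp

end Aux2

open scoped NNReal

theorem stmt7
    (μ : Measure Ω) [IsProbabilityMeasure μ] (ℱ : Filtration ℕ m0)
    (hsup : (⨆ n, (ℱ n : MeasurableSpace Ω)) = m0)
    (Os : ℤ → Set Ω) (hOmeas : ∀ j, MeasurableSet (Os j)) (hOne : ∀ j, (Os j).Nonempty)
    (hOdisj : Pairwise fun i j => Disjoint (Os i) (Os j)) (hOcov : (⋃ j, Os j) = Set.univ)
    (p : ℝ) (q : ℝ≥0∞) (hp : 0 < p) (hq : 0 < q) (η : ℝ) (hη0 : 0 < η) (hη1 : η ≤ 1) :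
    ∃ C : ℝ≥0∞, C ≠ ∞ ∧
      ∀ (f : ℕ → Ω → ℝ) (l : ℤ → ℝ) (a : ℤ → Ω → ℝ) (ν : ℤ → Ω → ℕ∞),
        Martingale f ℱ μ → f 0 = 0 → (∀ k, 0 ≤ l k) →
        (∀ k, IsAtomStar ℱ μ p (a k) (ν k)) →
        (∀ n : ℕ, ∀ᵐ ω ∂μ, f n ω = ∑' k : ℤ, l k * (μ[a k|ℱ n]) ω) →
        (amalgamNorm μ Os (p / η) (q / ENNReal.ofReal η)
            (fun ω => ∑' k : ℤ, (Bset (ν k)).indicator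
              (fun _ => (ENNReal.ofReal (l k) / μ (Bset (ν k)) ^ (1 / p)) ^ η) ω) < ∞ → PNorm ℱ μ Os p q f < ∞) ∧
        PNorm ℱ μ Os p q f ≤
          C * (amalgamNorm μ Os (p / η) (q / ENNReal.ofReal η)
            (fun ω => ∑' k : ℤ, (Bset (ν k)).indicator
              (fun _ => (ENNReal.ofReal (l k) / μ (Bset (ν k)) ^ (1 / p)) ^ η) ω)) ^ (1 / η) := by
  classical
  refine ⟨1, ENNReal.one_ne_top, ?_⟩
  intro f l a ν hmart hf0 hl hatom hrep
  set G : Ω → ℝ≥0∞ := fun ω => ∑' k : ℤ, (Bset (ν k)).indicator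
      (fun _ => (ENNReal.ofReal (l k) / μ (Bset (ν k)) ^ (1 / p)) ^ η) ω with hG
  suffices key : PNorm ℱ μ Os p q f ≤
      (amalgamNorm μ Os (p / η) (q / ENNReal.ofReal η) G) ^ (1 / η) by
    refine ⟨fun hfin => ?_, by rw [one_mul]; exact key⟩
    exact lt_of_le_of_lt key (ENNReal.rpow_lt_top_of_nonneg (by positivity) hfin.ne)
  by_cases hRtop : amalgamNorm μ Os (p / η) (q / ENNReal.ofReal η) G = ⊤
  · rw [hRtop, ENNReal.top_rpow_of_pos (by positivity)]
    exact le_top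
  have hp' : 0 < p / η := div_pos hp hη0
  have hBmeas : ∀ k, MeasurableSet (Bset (ν k)) := fun k => aux_Bset_meas (hatom k).stopping
  have hGmeas : Measurable G := by
    rw [hG]
    exact Measurable.ennreal_tsum fun k => Measurable.indicator measurable_const (hBmeas k)
  -- each local integral of G^(p/η) is finite
  have hint : ∀ j : ℤ, (∫⁻ ω in Os j, G ω ^ (p / η) ∂μ) ≠ ⊤ := by
    intro j
    by_cases hq' : q / ENNReal.ofReal η = ⊤
    · have h1 : (∫⁻ ω in Os j, G ω ^ (p / η) ∂μ) ^ (1 / (p / η)) ≤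
          amalgamNorm μ Os (p / η) (q / ENNReal.ofReal η) G := by
        unfold amalgamNorm
        rw [if_pos hq']
        exact le_iSup (fun j => (∫⁻ ω in Os j, G ω ^ (p / η) ∂μ) ^ (1 / (p / η))) j
      intro htop
      rw [htop, ENNReal.top_rpow_of_pos (by positivity)] at h1
      exact hRtop (top_le_iff.mp h1)
    · have hq'0 : (q / ENNReal.ofReal η) ≠ 0 := by
        simp only [ne_eq, ENNReal.div_eq_zero_iff, not_or]
        exact ⟨hq.ne', ENNReal.ofReal_ne_top⟩
      have hts : 0 < (q / ENNReal.ofReal η).toReal := ENNReal.toReal_pos hq'0 hq'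
      have h1 : (∫⁻ ω in Os j, G ω ^ (p / η) ∂μ) ^ ((q / ENNReal.ofReal η).toReal / (p / η)) ≤
          (amalgamNorm μ Os (p / η) (q / ENNReal.ofReal η) G) ^ (q / ENNReal.ofReal η).toReal := by
        unfold amalgamNorm
        rw [if_neg hq', ← ENNReal.rpow_mul, one_div_mul_cancel hts.ne', ENNReal.rpow_one]
        exact ENNReal.le_tsum j
      intro htop
      rw [htop, ENNReal.top_rpow_of_pos (div_pos hts hp')] at h1
      exact ENNReal.rpow_ne_top_of_nonneg hts.le hRtop (top_le_iff.mp h1)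
  have hGfin : ∀ᵐ ω ∂μ, G ω ≠ ⊤ := by
    have hae : ∀ j : ℤ, ∀ᵐ ω ∂μ, ω ∈ Os j → G ω ≠ ⊤ := by
      intro j
      have h2 : ∀ᵐ ω ∂(μ.restrict (Os j)), G ω ^ (p / η) < ⊤ :=
        ae_lt_top (hGmeas.pow_const _) (hint j)
      have h3 : ∀ᵐ ω ∂(μ.restrict (Os j)), G ω ≠ ⊤ := by
        filter_upwards [h2] with ω hω
        intro hGtop
        rw [hGtop, ENNReal.top_rpow_of_pos hp'] at hω
        exact absurd hω (lt_irrefl ⊤)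
      exact (ae_restrict_iff' (hOmeas j)).mp h3
    filter_upwards [ae_all_iff.mpr hae] with ω hω
    have : ω ∈ ⋃ j, Os j := hOcov.symm ▸ Set.mem_univ ω
    obtain ⟨j, hj⟩ := Set.mem_iUnion.mp this
    exact hω j hj
  -- the pointwise sums g_n and g_∞
  set c : ℤ → ℝ≥0∞ := fun k => ENNReal.ofReal (l k) / μ (Bset (ν k)) ^ (1 / p) with hc
  set gf : ℕ → Ω → ℝ≥0∞ :=
    fun n ω => ∑' k : ℤ, ({ω' | ν k ω' ≤ (n : ℕ∞)}).indicator (fun _ => c k) ω with hgf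
  have hsub : ∀ (k : ℤ) (n : ℕ), {ω' | ν k ω' ≤ (n : ℕ∞)} ⊆ Bset (ν k) := by
    intro k n ω hω
    exact ne_top_of_le_ne_top (by simp) hω
  have hginfG : ∀ ω, (∑' k : ℤ, (Bset (ν k)).indicator (fun _ => c k) ω) ≤ G ω ^ (1 / η) := by
    intro ω
    have h1 : (∑' k : ℤ, (Bset (ν k)).indicator (fun _ => c k) ω) ^ η ≤ G ω := by
      refine le_trans (aux_tsum_rpow _ hη0 hη1) (le_of_eq ?_)
      rw [hG]
      apply tsum_congr
      intro k
      simp only [hc]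
      by_cases hω : ω ∈ Bset (ν k)
      · rw [Set.indicator_of_mem hω, Set.indicator_of_mem hω]
      · rw [Set.indicator_of_notMem hω, Set.indicator_of_notMem hω,
          ENNReal.zero_rpow_of_pos hη0]
    calc (∑' k : ℤ, (Bset (ν k)).indicator (fun _ => c k) ω)
        = ((∑' k : ℤ, (Bset (ν k)).indicator (fun _ => c k) ω) ^ η) ^ (1 / η) := by
          rw [← ENNReal.rpow_mul, mul_one_div_cancel hη0.ne', ENNReal.rpow_one]
      _ ≤ G ω ^ (1 / η) := ENNReal.rpow_le_rpow h1 (by positivity)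
  have hgle : ∀ (n : ℕ) (ω : Ω), gf n ω ≤ ∑' k : ℤ, (Bset (ν k)).indicator (fun _ => c k) ω :=
    fun n ω => ENNReal.tsum_le_tsum fun k =>
      Set.indicator_le_indicator_of_subset (hsub k n) (fun _ => zero_le) ω
  have hgfin : ∀ᵐ ω ∂μ, ∀ n, gf n ω ≠ ⊤ := by
    filter_upwards [hGfin] with ω hω n
    exact ne_top_of_le_ne_top (ENNReal.rpow_ne_top_of_nonneg (by positivity) hω)
      ((hgle n ω).trans (hginfG ω))
  -- key a.e. estimate
  have hbound : ∀ n : ℕ, ∀ᵐ ω ∂μ, ENNReal.ofReal |f (n + 1) ω| ≤ gf n ω := by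
    intro n
    have h2 : ∀ᵐ ω ∂μ, ∀ k : ℤ, (((n + 1 : ℕ)) : ℕ∞) ≤ ν k ω → (μ[a k|ℱ (n + 1)]) ω = 0 :=
      ae_all_iff.mpr fun k => (hatom k).vanish (n + 1)
    have h3 : ∀ᵐ ω ∂μ, ∀ k : ℤ,
        maxFn (fun m => μ[a k|ℱ m]) ω ≤ μ (Bset (ν k)) ^ (-(1 / p)) := by
      refine ae_all_iff.mpr fun k => ?_
      filter_upwards [ENNReal.ae_le_essSup (f := maxFn fun m => μ[a k|ℱ m]) (μ := μ)] with ω hω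
      exact hω.trans (hatom k).size
    filter_upwards [hrep (n + 1), h2, h3] with ω hω1 hω2 hω3
    rw [hω1]
    refine le_trans (aux_ofReal_abs_tsum _) (ENNReal.tsum_le_tsum fun k => ?_)
    by_cases hm : ν k ω ≤ (n : ℕ∞)
    · rw [Set.indicator_of_mem (show ω ∈ {ω' | ν k ω' ≤ (n : ℕ∞)} from hm)]
      rw [abs_mul, abs_of_nonneg (hl k), ENNReal.ofReal_mul (hl k)]
      simp only [hc, div_eq_mul_inv, one_mul]
      refine mul_le_mul_right ?_ _
      have h4 : ENNReal.ofReal |(μ[a k|ℱ (n + 1)]) ω| ≤ maxFn (fun m => μ[a k|ℱ m]) ω :=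
        le_iSup (fun m => ENNReal.ofReal |(μ[a k|ℱ m]) ω|) (n + 1)
      refine h4.trans ((hω3 k).trans (le_of_eq ?_))
      rw [ENNReal.rpow_neg, one_div]
    · rw [Set.indicator_of_notMem (show ω ∉ {ω' | ν k ω' ≤ (n : ℕ∞)} from hm)]
      have hz : (μ[a k|ℱ (n + 1)]) ω = 0 := by
        refine hω2 k ?_
        have hlt : (n : ℕ∞) < ν k ω := lt_of_not_ge hm
        rw [Nat.cast_add, Nat.cast_one]
        exact (ENat.add_one_le_iff (by simp)).mpr hlt
      simp [hz]
  -- the predictable majorant β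
  set β : ℕ → Ω → ℝ :=
    fun n ω => (((Finset.range (n + 1)).sup (fun m => (gf m ω).toNNReal) : ℝ≥0) : ℝ) with hβ
  have hβΓ : MemGamma ℱ β := by
    refine ⟨?_, ?_, ?_⟩
    · intro n
      have hsupmeas : ∀ s : Finset ℕ, (∀ m ∈ s, m ≤ n) →
          Measurable[ℱ n] fun ω => (s.sup fun m => (gf m ω).toNNReal) := by
        intro s
        induction s using Finset.induction_on with
        | empty => intro _; simpa using measurable_const
        | @insert m s hm ih =>
          intro hmem
          simp only [Finset.sup_insert]
          refine Measurable.sup ?_ (ih fun x hx => hmem x (Finset.mem_insert_of_mem hx))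
          have hg1 : Measurable[ℱ m] (gf m) := by
            rw [hgf]
            exact Measurable.ennreal_tsum fun k =>
              Measurable.indicator measurable_const ((hatom k).stopping m)
          have hg2 : Measurable[ℱ n] (gf m) :=
            hg1.mono (ℱ.mono (hmem m (Finset.mem_insert_self m s))) le_rfl
          exact ENNReal.measurable_toNNReal.comp hg2
      simp only [hβ]
      exact measurable_coe_nnreal_real.comp
        (hsupmeas (Finset.range (n + 1)) fun m hm => Nat.lt_succ_iff.mp (Finset.mem_range.mp hm))
    · intro ω n n' hnn'
      have hmono := Finset.sup_mono
        (Finset.range_subset_range.mpr (by omega) : Finset.range (n + 1) ⊆ Finset.range (n' + 1))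
          (f := fun m => (gf m ω).toNNReal)
      simp only [hβ]
      exact_mod_cast hmono
    · intro n ω
      simp only [hβ]
      exact NNReal.coe_nonneg _
  have hβbound : ∀ n : ℕ, ∀ᵐ ω ∂μ, |f (n + 1) ω| ≤ β n ω := by
    intro n
    filter_upwards [hbound n, hgfin] with ω h1 h2
    have h3 : |f (n + 1) ω| ≤ ((gf n ω).toNNReal : ℝ) := by
      have h4 := ENNReal.toReal_mono (h2 n) h1
      rwa [ENNReal.toReal_ofReal (abs_nonneg _)] at h4
    refine h3.trans ?_
    simp only [hβ]
    exact_mod_cast Finset.le_sup (f := fun m => (gf m ω).toNNReal)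
      (Finset.self_mem_range_succ n)
  have hβinf : ∀ ω, betaInfty β ω ≤ G ω ^ (1 / η) := by
    intro ω
    refine iSup_le fun n => ?_
    calc ENNReal.ofReal (β n ω)
        = (((Finset.range (n + 1)).sup (fun m => (gf m ω).toNNReal) : ℝ≥0) : ℝ≥0∞) := by
          simp only [hβ]
          exact ENNReal.ofReal_coe_nnreal
      _ = (Finset.range (n + 1)).sup (fun m => ((gf m ω).toNNReal : ℝ≥0∞)) :=
          ENNReal.coe_finset_sup
      _ ≤ G ω ^ (1 / η) := Finset.sup_le fun m _ =>
          le_trans ENNReal.coe_toNNReal_le_self (le_trans (hgle m ω) (hginfG ω))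
  calc PNorm ℱ μ Os p q f ≤ amalgamNorm μ Os p q (betaInfty β) :=
        iInf_le_of_le β (iInf_le_of_le ⟨hβΓ, hβbound⟩ le_rfl)
    _ ≤ amalgamNorm μ Os p q (fun ω => G ω ^ (1 / η)) :=
        aux_amalgam_mono μ Os hp q hβinf
    _ = (amalgamNorm μ Os (p / η) (q / ENNReal.ofReal η) G) ^ (1 / η) :=
        aux_amalgam_scale μ Os hp hη0 hq G

end
end

section
/- Let 0<p<1 and 0<q≤1. For every finite sequence {f_n}_{n=−m}^{m} of elements of L_{p,q}(Ω), the reverse Minkowski inequality holds in the amalgam quasi-norm: ∑_{n=−m}^{m}‖f_n‖_{p,q} ≤ ‖∑_{n=−m}^{m}|f_n|‖_{p,q}. -/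
open MeasureTheory Filter
open scoped ENNReal ENat

noncomputable section

variable {Ω : Type*} {m0 : MeasurableSpace Ω}

lemma myConcave2 {p : ℝ} (hp0 : 0 < p) (hp1 : p ≤ 1) (w₁ w₂ z₁ z₂ : ℝ≥0∞)
    (hw : w₁ + w₂ = 1) :
    w₁ * z₁ ^ p + w₂ * z₂ ^ p ≤ (w₁ * z₁ + w₂ * z₂) ^ p := by
  have hr : (1 : ℝ) ≤ p⁻¹ := (one_le_inv₀ hp0).2 hp1
  have h := ENNReal.rpow_arith_mean_le_arith_mean2_rpow w₁ w₂ (z₁ ^ p) (z₂ ^ p) hw hr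
  rw [ENNReal.rpow_rpow_inv hp0.ne', ENNReal.rpow_rpow_inv hp0.ne'] at h
  calc w₁ * z₁ ^ p + w₂ * z₂ ^ p
      = ((w₁ * z₁ ^ p + w₂ * z₂ ^ p) ^ p⁻¹) ^ p := (ENNReal.rpow_inv_rpow hp0.ne' _).symm
    _ ≤ (w₁ * z₁ + w₂ * z₂) ^ p := ENNReal.rpow_le_rpow h hp0.le

lemma myRevMink2 {α : Type*} [MeasurableSpace α] (μ : Measure α) {p : ℝ}
    (hp0 : 0 < p) (hp1 : p ≤ 1) {g h : α → ℝ≥0∞}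
    (hg : Measurable g) (hh : Measurable h) :
    (∫⁻ ω, g ω ^ p ∂μ) ^ (1 / p) + (∫⁻ ω, h ω ^ p ∂μ) ^ (1 / p) ≤
      (∫⁻ ω, (g ω + h ω) ^ p ∂μ) ^ (1 / p) := by
  set A := (∫⁻ ω, g ω ^ p ∂μ) ^ (1 / p) with hA
  set B := (∫⁻ ω, h ω ^ p ∂μ) ^ (1 / p) with hB
  have hmonog : (∫⁻ ω, g ω ^ p ∂μ) ≤ ∫⁻ ω, (g ω + h ω) ^ p ∂μ :=
    lintegral_mono fun ω => ENNReal.rpow_le_rpow le_self_add hp0.le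
  have hmonoh : (∫⁻ ω, h ω ^ p ∂μ) ≤ ∫⁻ ω, (g ω + h ω) ^ p ∂μ :=
    lintegral_mono fun ω => ENNReal.rpow_le_rpow le_add_self hp0.le
  rcases eq_or_ne A 0 with hA0 | hA0
  · rw [hA0, zero_add]
    exact ENNReal.rpow_le_rpow hmonoh (by positivity)
  rcases eq_or_ne B 0 with hB0 | hB0
  · rw [hB0, add_zero]
    exact ENNReal.rpow_le_rpow hmonog (by positivity)
  rcases eq_or_ne A ⊤ with hAt | hAt
  · have h1 : (∫⁻ ω, g ω ^ p ∂μ) = ⊤ := by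
      by_contra hne
      exact (ENNReal.rpow_lt_top_of_nonneg (by positivity) hne).ne hAt
    have h2 : (∫⁻ ω, (g ω + h ω) ^ p ∂μ) = ⊤ := top_le_iff.1 (h1 ▸ hmonog)
    rw [h2, ENNReal.top_rpow_of_pos (by positivity)]
    exact le_top
  rcases eq_or_ne B ⊤ with hBt | hBt
  · have h1 : (∫⁻ ω, h ω ^ p ∂μ) = ⊤ := by
      by_contra hne
      exact (ENNReal.rpow_lt_top_of_nonneg (by positivity) hne).ne hBt
    have h2 : (∫⁻ ω, (g ω + h ω) ^ p ∂μ) = ⊤ := top_le_iff.1 (h1 ▸ hmonoh)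
    rw [h2, ENNReal.top_rpow_of_pos (by positivity)]
    exact le_top
  -- main case
  have hS0 : A + B ≠ 0 := by simp [hA0]
  have hSt : A + B ≠ ⊤ := by simp [hAt, hBt]
  set w₁ := A / (A + B) with hw₁def
  set w₂ := B / (A + B) with hw₂def
  have hw : w₁ + w₂ = 1 := by
    rw [hw₁def, hw₂def, ENNReal.div_add_div_same, ENNReal.div_self hS0 hSt]
  have hw₁0 : w₁ ≠ 0 := by
    simp only [hw₁def, ne_eq, ENNReal.div_eq_zero_iff]; push_neg; exact ⟨hA0, hSt⟩
  have hw₁t : w₁ ≠ ⊤ := by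
    simp only [hw₁def, ne_eq, ENNReal.div_eq_top]; push_neg
    exact ⟨fun _ => hS0, fun h => absurd h hAt⟩
  have hw₂0 : w₂ ≠ 0 := by
    simp only [hw₂def, ne_eq, ENNReal.div_eq_zero_iff]; push_neg; exact ⟨hB0, hSt⟩
  have hw₂t : w₂ ≠ ⊤ := by
    simp only [hw₂def, ne_eq, ENNReal.div_eq_top]; push_neg
    exact ⟨fun _ => hS0, fun h => absurd h hBt⟩
  have hptwise : ∀ ω, w₁ ^ (1 - p) * g ω ^ p + w₂ ^ (1 - p) * h ω ^ p ≤ (g ω + h ω) ^ p := by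
    intro ω
    have key := myConcave2 hp0 hp1 w₁ w₂ (g ω / w₁) (h ω / w₂) hw
    rw [ENNReal.mul_div_cancel hw₁0 hw₁t, ENNReal.mul_div_cancel hw₂0 hw₂t] at key
    refine le_trans (le_of_eq ?_) key
    have e1 : ∀ (w x : ℝ≥0∞), w ≠ 0 → w ≠ ⊤ → w ^ (1 - p) * x ^ p = w * (x / w) ^ p := by
      intro w x hw0 hwt
      rw [ENNReal.div_rpow_of_nonneg _ _ hp0.le, ENNReal.rpow_sub 1 p hw0 hwt,
        ENNReal.rpow_one, div_eq_mul_inv, div_eq_mul_inv, mul_assoc,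
        mul_comm (w ^ p)⁻¹, ← mul_assoc]
    rw [e1 _ _ hw₁0 hw₁t, e1 _ _ hw₂0 hw₂t]
  have hint : (A + B) ^ p ≤ ∫⁻ ω, (g ω + h ω) ^ p ∂μ := by
    have := lintegral_mono (μ := μ) hptwise
    rw [lintegral_add_left (by fun_prop) , lintegral_const_mul _ (by fun_prop),
      lintegral_const_mul _ (by fun_prop)] at this
    refine le_trans (le_of_eq ?_) this
    have hAp : (∫⁻ ω, g ω ^ p ∂μ) = A ^ p := by
      rw [hA, one_div, ENNReal.rpow_inv_rpow hp0.ne']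
    have hBp : (∫⁻ ω, h ω ^ p ∂μ) = B ^ p := by
      rw [hB, one_div, ENNReal.rpow_inv_rpow hp0.ne']
    rw [hAp, hBp, hw₁def, hw₂def,
      ENNReal.div_rpow_of_nonneg _ _ (by linarith : (0:ℝ) ≤ 1 - p),
      ENNReal.div_rpow_of_nonneg _ _ (by linarith : (0:ℝ) ≤ 1 - p)]
    rw [div_eq_mul_inv, div_eq_mul_inv, mul_assoc, mul_assoc,
      mul_comm ((A+B) ^ (1-p))⁻¹, mul_comm ((A+B) ^ (1-p))⁻¹,
      ← mul_assoc, ← mul_assoc, ← ENNReal.rpow_add _ _ hA0 hAt,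
      ← ENNReal.rpow_add _ _ hB0 hBt]
    have : (1 : ℝ) - p + p = 1 := by ring
    rw [this, ENNReal.rpow_one, ENNReal.rpow_one, ← add_mul]
    rw [← ENNReal.rpow_neg_one ((A + B) ^ (1 - p)), ← ENNReal.rpow_mul]
    have h2 : (1 - p) * (-1) = p - 1 := by ring
    rw [h2]
    calc (A + B) ^ p = (A + B) ^ ((1 : ℝ) + (p - 1)) := by norm_num
      _ = (A + B) ^ (1 : ℝ) * (A + B) ^ (p - 1) := ENNReal.rpow_add _ _ hS0 hSt
      _ = (A + B) * (A + B) ^ (p - 1) := by rw [ENNReal.rpow_one]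
  calc A + B = ((A + B) ^ p) ^ (1 / p) := by
        rw [one_div, ENNReal.rpow_rpow_inv hp0.ne']
    _ ≤ (∫⁻ ω, (g ω + h ω) ^ p ∂μ) ^ (1 / p) :=
        ENNReal.rpow_le_rpow hint (by positivity)

lemma myRevMinkFinset {α ι : Type*} [MeasurableSpace α] (μ : Measure α) {p : ℝ}
    (hp0 : 0 < p) (hp1 : p ≤ 1) (s : Finset ι) (g : ι → α → ℝ≥0∞)
    (hg : ∀ i, Measurable (g i)) :
    ∑ i ∈ s, (∫⁻ ω, g i ω ^ p ∂μ) ^ (1 / p) ≤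
      (∫⁻ ω, (∑ i ∈ s, g i ω) ^ p ∂μ) ^ (1 / p) := by
  classical
  induction s using Finset.induction with
  | empty => simp
  | @insert a s ha ih =>
    rw [Finset.sum_insert ha]
    refine le_trans (add_le_add_right ih _) ?_
    have h := myRevMink2 μ hp0 hp1 (hg a)
      (Finset.measurable_sum s fun i _ => hg i : Measurable fun ω => ∑ i ∈ s, g i ω)
    simpa [Finset.sum_insert ha] using h

lemma myKey {Ω : Type*} {m0 : MeasurableSpace Ω}
    (μ : Measure Ω) [IsProbabilityMeasure μ]
    (Os : ℤ → Set Ω) (hOmeas : ∀ j, MeasurableSet (Os j)) (hOne : ∀ j, (Os j).Nonempty)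
    (hOdisj : Pairwise fun i j => Disjoint (Os i) (Os j)) (hOcov : (⋃ j, Os j) = Set.univ)
    (p q : ℝ) (hp0 : 0 < p) (hp1 : p < 1) (hq0 : 0 < q) (hq1 : q ≤ 1)
    (m : ℕ) (f : ℤ → Ω → ℝ) (hmeas : ∀ n, Measurable (f n)) :
    ∑ n ∈ Finset.Icc (-(m : ℤ)) (m : ℤ),
        (∑' j : ℤ, (∫⁻ ω in Os j, ENNReal.ofReal |f n ω| ^ p ∂μ) ^ (q / p)) ^ (1 / q) ≤
      (∑' j : ℤ, (∫⁻ ω in Os j,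
          ENNReal.ofReal (abs (∑ n ∈ Finset.Icc (-(m : ℤ)) (m : ℤ), |f n ω|)) ^ p ∂μ) ^ (q / p)) ^
        (1 / q) := by
  set S := Finset.Icc (-(m : ℤ)) (m : ℤ) with hS
  have hFmeas : ∀ n : ℤ, Measurable fun ω => ENNReal.ofReal |f n ω| :=
    fun n => (hmeas n).abs.ennreal_ofReal
  set I : ℤ → ℤ → ℝ≥0∞ := fun n j => ∫⁻ ω in Os j, ENNReal.ofReal |f n ω| ^ p ∂μ with hI
  set J : ℤ → ℝ≥0∞ :=
    fun j => ∫⁻ ω in Os j, ENNReal.ofReal (abs (∑ n ∈ S, |f n ω|)) ^ p ∂μ with hJ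
  have stepA : ∀ j, ∑ n ∈ S, I n j ^ (1 / p) ≤ J j ^ (1 / p) := by
    intro j
    have h := myRevMinkFinset (μ.restrict (Os j)) hp0 hp1.le S
      (fun n ω => ENNReal.ofReal |f n ω|) hFmeas
    refine h.trans (le_of_eq ?_)
    congr 1
    refine lintegral_congr fun ω => ?_
    congr 1
    rw [abs_of_nonneg (Finset.sum_nonneg fun n _ => abs_nonneg _),
      ENNReal.ofReal_sum_of_nonneg fun n _ => abs_nonneg _]
  set c : ℤ → ℤ → ℝ≥0∞ := fun n j => I n j ^ (1 / p) with hc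
  have hpow : ∀ n j, I n j ^ (q / p) = c n j ^ q := by
    intro n j
    rw [hc, ← ENNReal.rpow_mul]
    congr 1
    field_simp
  have stepB : ∑ n ∈ S, (∑' j, c n j ^ q) ^ (1 / q) ≤
      (∑' j, (∑ n ∈ S, c n j) ^ q) ^ (1 / q) := by
    have h := myRevMinkFinset (Measure.count : Measure ℤ) hq0 hq1 S
      (fun n j => c n j) (fun n => measurable_of_countable _)
    simpa [MeasureTheory.lintegral_count] using h
  calc ∑ n ∈ S, (∑' j, I n j ^ (q / p)) ^ (1 / q)
      = ∑ n ∈ S, (∑' j, c n j ^ q) ^ (1 / q) := by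
        refine Finset.sum_congr rfl fun n _ => ?_
        congr 1
        exact tsum_congr fun j => hpow n j
    _ ≤ (∑' j, (∑ n ∈ S, c n j) ^ q) ^ (1 / q) := stepB
    _ ≤ (∑' j, J j ^ (q / p)) ^ (1 / q) := by
        refine ENNReal.rpow_le_rpow (ENNReal.tsum_le_tsum fun j => ?_) (by positivity)
        have hJe : J j ^ (q / p) = (J j ^ (1 / p)) ^ q := by
          rw [← ENNReal.rpow_mul]
          congr 1
          field_simp
        rw [hJe]
        exact ENNReal.rpow_le_rpow (stepA j) hq0.le


theorem stmt14
    (μ : Measure Ω) [IsProbabilityMeasure μ]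
    (Os : ℤ → Set Ω) (hOmeas : ∀ j, MeasurableSet (Os j)) (hOne : ∀ j, (Os j).Nonempty)
    (hOdisj : Pairwise fun i j => Disjoint (Os i) (Os j)) (hOcov : (⋃ j, Os j) = Set.univ)
    (p q : ℝ) (hp0 : 0 < p) (hp1 : p < 1) (hq0 : 0 < q) (hq1 : q ≤ 1)
    (m : ℕ) (f : ℤ → Ω → ℝ) (hmeas : ∀ n, Measurable (f n))
    (hmem : ∀ n, amalgamNormR μ Os p (ENNReal.ofReal q) (f n) < ∞) :
    ∑ n ∈ Finset.Icc (-(m : ℤ)) (m : ℤ), amalgamNormR μ Os p (ENNReal.ofReal q) (f n) ≤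
      amalgamNormR μ Os p (ENNReal.ofReal q)
        fun ω => ∑ n ∈ Finset.Icc (-(m : ℤ)) (m : ℤ), |f n ω| := by
  have hq'ne : ENNReal.ofReal q ≠ ∞ := ENNReal.ofReal_ne_top
  have hq't : (ENNReal.ofReal q).toReal = q := ENNReal.toReal_ofReal hq0.le
  simp only [amalgamNormR, amalgamNorm, if_neg hq'ne, hq't]
  exact myKey μ Os hOmeas hOne hOdisj hOcov p q hp0 hp1 hq0 hq1 m f hmeas


end
end

section
/- Let 0<p≤q≤1. There is a constant C such that for every stopping time ν and every f∈L_2(Ω) with f supported in B_ν and 𝔼_n f = 0 almost everywhere on {ν≥n} for every n, the martingale (𝔼_n f)_n belongs to H^s_{p,q} and ‖f‖_{H^s_{p,q}} ≤ C ℙ(B_ν)^{1/p−1/2} (∫_{B_ν}|f|^2 dℙ)^{1/2}. Consequently, every continuous linear functional κ on H^s_{p,q} restricts to a continuous linear functional on this subspace L_2^ν(B_ν) of L_2, with norm at most C ℙ(B_ν)^{1/p−1/2}‖κ‖. -/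
open MeasureTheory Filter
open scoped ENNReal ENat

noncomputable section

variable {Ω : Type*} {m0 : MeasurableSpace Ω}

theorem my_memL2_condexp (μ : Measure Ω) [IsFiniteMeasure μ] (ℱ : Filtration ℕ m0) (n : ℕ)
    {f : Ω → ℝ} (hf : MemLp f 2 μ) : MemLp (μ[f|ℱ n]) 2 μ := by
  have hm : (ℱ n : MeasurableSpace Ω) ≤ m0 := ℱ.le n
  have hfi : Integrable f μ := hf.integrable one_le_two
  have hFf : (hf.toLp f : Ω → ℝ) =ᵐ[μ] f := hf.coeFn_toLp
  set G := condExpL2 ℝ ℝ hm (hf.toLp f) with hGdef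
  have hg : MemLp ((G : Lp ℝ 2 μ) : Ω → ℝ) 2 μ := Lp.memLp _
  have heq : ((G : Lp ℝ 2 μ) : Ω → ℝ) =ᵐ[μ] μ[f|ℱ n] := by
    refine ae_eq_condExp_of_forall_setIntegral_eq hm hfi ?_ ?_ ?_
    · intro s _ _
      exact (hg.integrable one_le_two).integrableOn
    · intro s hs hμs
      rw [hGdef, integral_condExpL2_eq hm (hf.toLp f) hs hμs.ne]
      exact setIntegral_congr_ae (hm s hs) (hFf.mono fun x hx _ => hx)
    · exact lpMeas.aestronglyMeasurable _
  exact hg.ae_eq heq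

theorem my_integrable_mul {μ : Measure Ω} {f g : Ω → ℝ}
    (hf : MemLp f 2 μ) (hg : MemLp g 2 μ) : Integrable (fun ω => f ω * g ω) μ := by
  have h1 := (hf.add hg).integrable_sq
  have h2 := hf.integrable_sq
  have h3 := hg.integrable_sq
  have heq : (fun ω => f ω * g ω) =
      fun ω => (((f + g) ω ^ 2 - f ω ^ 2) - g ω ^ 2) / 2 := by
    funext ω; simp [Pi.add_apply]; ring
  rw [heq]
  exact (((h1.sub h2).sub h3).div_const 2)

theorem my_proj_mul (μ : Measure Ω) [IsProbabilityMeasure μ] (ℱ : Filtration ℕ m0) (n : ℕ)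
    {f g : Ω → ℝ} (hf : MemLp f 2 μ) (hg : MemLp g 2 μ) :
    ∫ ω, (μ[f|ℱ n]) ω * g ω ∂μ = ∫ ω, (μ[f|ℱ n]) ω * (μ[g|ℱ n]) ω ∂μ := by
  have hfm := my_memL2_condexp μ ℱ n hf
  have h1 : Integrable (fun ω => (μ[f|ℱ n]) ω * g ω) μ := my_integrable_mul hfm hg
  have h2 : μ[(μ[f|ℱ n] * g)|ℱ n] =ᵐ[μ] μ[f|ℱ n] * μ[g|ℱ n] :=
    condExp_mul_of_stronglyMeasurable_left stronglyMeasurable_condExp h1 (hg.integrable one_le_two)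
  calc ∫ ω, (μ[f|ℱ n]) ω * g ω ∂μ
      = ∫ ω, ((μ[f|ℱ n]) * g) ω ∂μ := rfl
    _ = ∫ ω, (μ[(μ[f|ℱ n] * g)|ℱ n]) ω ∂μ := (integral_condExp (ℱ.le n)).symm
    _ = ∫ ω, ((μ[f|ℱ n]) * (μ[g|ℱ n])) ω ∂μ := integral_congr_ae h2
    _ = ∫ ω, (μ[f|ℱ n]) ω * (μ[g|ℱ n]) ω ∂μ := rfl

theorem my_cross (μ : Measure Ω) [IsProbabilityMeasure μ] (ℱ : Filtration ℕ m0)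
    {f : Ω → ℝ} (hf : MemLp f 2 μ) (N : ℕ) {g : Ω → ℝ} (hg : MemLp g 2 μ)
    (hgc : μ[g|ℱ N] =ᵐ[μ] μ[f|ℱ N]) :
    ∫ ω, (μ[f|ℱ N]) ω * g ω ∂μ = ∫ ω, (μ[f|ℱ N]) ω ^ 2 ∂μ := by
  rw [my_proj_mul μ ℱ N hf hg]
  refine integral_congr_ae ?_
  filter_upwards [hgc] with ω hω
  rw [hω]; ring

theorem my_step (μ : Measure Ω) [IsProbabilityMeasure μ] (ℱ : Filtration ℕ m0)
    {f : Ω → ℝ} (hf : MemLp f 2 μ) (N : ℕ) :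
    ∫ ω, ((μ[f|ℱ (N + 1)]) ω - (μ[f|ℱ N]) ω) ^ 2 ∂μ =
      ∫ ω, (μ[f|ℱ (N + 1)]) ω ^ 2 ∂μ - ∫ ω, (μ[f|ℱ N]) ω ^ 2 ∂μ := by
  have hA := my_memL2_condexp μ ℱ (N + 1) hf
  have hB := my_memL2_condexp μ ℱ N hf
  have h1 : Integrable (fun ω => (μ[f|ℱ (N + 1)]) ω ^ 2 + (μ[f|ℱ N]) ω ^ 2) μ :=
    hA.integrable_sq.add hB.integrable_sq
  have h2 : Integrable (fun ω => (μ[f|ℱ N]) ω * (μ[f|ℱ (N + 1)]) ω) μ :=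
    my_integrable_mul hB hA
  have e : (fun ω => ((μ[f|ℱ (N + 1)]) ω - (μ[f|ℱ N]) ω) ^ 2) =
      fun ω => ((μ[f|ℱ (N + 1)]) ω ^ 2 + (μ[f|ℱ N]) ω ^ 2) -
        2 * ((μ[f|ℱ N]) ω * (μ[f|ℱ (N + 1)]) ω) := by
    funext ω; ring
  have hcross : ∫ ω, (μ[f|ℱ N]) ω * (μ[f|ℱ (N + 1)]) ω ∂μ =
      ∫ ω, (μ[f|ℱ N]) ω ^ 2 ∂μ :=
    my_cross μ ℱ hf N hA (condExp_condExp_of_le (ℱ.mono (Nat.le_succ N)) (ℱ.le (N + 1)))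
  rw [e, integral_sub h1 (h2.const_mul 2), integral_add hA.integrable_sq hB.integrable_sq,
    integral_const_mul, hcross]
  ring

theorem my_sq_le (μ : Measure Ω) [IsProbabilityMeasure μ] (ℱ : Filtration ℕ m0)
    {f : Ω → ℝ} (hf : MemLp f 2 μ) (N : ℕ) :
    ∫ ω, (μ[f|ℱ N]) ω ^ 2 ∂μ ≤ ∫ ω, f ω ^ 2 ∂μ := by
  have hB := my_memL2_condexp μ ℱ N hf
  have h2 : Integrable (fun ω => (μ[f|ℱ N]) ω * f ω) μ := my_integrable_mul hB hf
  have e : (fun ω => (f ω - (μ[f|ℱ N]) ω) ^ 2) =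
      fun ω => (f ω ^ 2 + (μ[f|ℱ N]) ω ^ 2) - 2 * ((μ[f|ℱ N]) ω * f ω) := by
    funext ω; ring
  have hcross : ∫ ω, (μ[f|ℱ N]) ω * f ω ∂μ = ∫ ω, (μ[f|ℱ N]) ω ^ 2 ∂μ :=
    my_cross μ ℱ hf N hf EventuallyEq.rfl
  have hnn : 0 ≤ ∫ ω, (f ω - (μ[f|ℱ N]) ω) ^ 2 ∂μ :=
    integral_nonneg fun ω => sq_nonneg _
  have h1 : Integrable (fun ω => f ω ^ 2 + (μ[f|ℱ N]) ω ^ 2) μ :=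
    hf.integrable_sq.add hB.integrable_sq
  rw [e, integral_sub h1 (h2.const_mul 2),
    integral_add hf.integrable_sq hB.integrable_sq, integral_const_mul, hcross] at hnn
  linarith

theorem my_pythagoras (μ : Measure Ω) [IsProbabilityMeasure μ] (ℱ : Filtration ℕ m0)
    {f : Ω → ℝ} (hf : MemLp f 2 μ) (h0 : μ[f|ℱ 0] =ᵐ[μ] 0) (N : ℕ) :
    ∑ n ∈ Finset.range N, ∫ ω, ((μ[f|ℱ (n + 1)]) ω - (μ[f|ℱ n]) ω) ^ 2 ∂μ =
      ∫ ω, (μ[f|ℱ N]) ω ^ 2 ∂μ := by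
  induction N with
  | zero =>
    simp only [Finset.range_zero, Finset.sum_empty]
    rw [integral_congr_ae (g := fun _ => (0:ℝ)) (by filter_upwards [h0] with ω hω; simp [hω])]
    simp
  | succ N ih =>
    rw [Finset.sum_range_succ, ih, my_step μ ℱ hf N]
    ring

theorem my_tsum_rpow {a : ℤ → ℝ≥0∞} {r : ℝ} (hr : 1 ≤ r) :
    ∑' j, a j ^ r ≤ (∑' j, a j) ^ r := by
  set T := ∑' j, a j with hT
  rcases eq_or_ne T ⊤ with h | h
  · rw [h, ENNReal.top_rpow_of_pos (lt_of_lt_of_le one_pos hr)]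
    exact le_top
  rcases eq_or_ne T 0 with h0 | h0
  · have hz : ∀ j, a j = 0 := fun j => by
      have := ENNReal.le_tsum (f := a) j
      rw [← hT, h0] at this
      exact le_antisymm this zero_le
    have : ∀ j, a j ^ r = 0 := fun j => by
      rw [hz j, ENNReal.zero_rpow_of_pos (lt_of_lt_of_le one_pos hr)]
    rw [h0, tsum_congr this, tsum_zero, ENNReal.zero_rpow_of_pos (lt_of_lt_of_le one_pos hr)]
  have key : ∀ j, a j ^ r ≤ T ^ (r - 1) * a j := by
    intro j
    rcases eq_or_ne (a j) 0 with hj | hj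
    · rw [hj, ENNReal.zero_rpow_of_pos (lt_of_lt_of_le one_pos hr)]
      exact zero_le
    have hjt : a j ≠ ⊤ := fun hc => h (by
      have := ENNReal.le_tsum (f := a) j
      rw [← hT] at this; exact top_le_iff.mp (hc ▸ this))
    have heq : a j ^ (r - 1) * a j = a j ^ r := by
      calc a j ^ (r - 1) * a j = a j ^ (r - 1) * a j ^ (1 : ℝ) := by rw [ENNReal.rpow_one]
        _ = a j ^ (r - 1 + 1) := by rw [← ENNReal.rpow_add _ _ hj hjt]
        _ = a j ^ r := by rw [sub_add_cancel]
      -- done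
    rw [← heq]
    exact mul_le_mul_left (ENNReal.rpow_le_rpow (ENNReal.le_tsum j) (by linarith)) _
  calc ∑' j, a j ^ r ≤ ∑' j, T ^ (r - 1) * a j := ENNReal.tsum_le_tsum key
    _ = T ^ (r - 1) * T := by rw [ENNReal.tsum_mul_left]
    _ = T ^ (r - 1) * T ^ (1 : ℝ) := by rw [ENNReal.rpow_one]
    _ = T ^ (r - 1 + 1) := by rw [← ENNReal.rpow_add _ _ h0 h]
    _ = T ^ r := by rw [sub_add_cancel]
theorem stmt17
    (μ : Measure Ω) [IsProbabilityMeasure μ] (ℱ : Filtration ℕ m0)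
    (hsup : (⨆ n, (ℱ n : MeasurableSpace Ω)) = m0)
    (Os : ℤ → Set Ω) (hOmeas : ∀ j, MeasurableSet (Os j)) (hOne : ∀ j, (Os j).Nonempty)
    (hOdisj : Pairwise fun i j => Disjoint (Os i) (Os j)) (hOcov : (⋃ j, Os j) = Set.univ)
    (p q : ℝ) (hp : 0 < p) (hpq : p ≤ q) (hq1 : q ≤ 1) :
    ∃ C : ℝ, 0 < C ∧
      (∀ ν : Ω → ℕ∞, IsStoppingTimeE ℱ ν →
        ∀ f : Ω → ℝ, MemLp f 2 μ → (∀ᵐ ω ∂μ, ν ω = ⊤ → f ω = 0) →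
          (∀ n : ℕ, ∀ᵐ ω ∂μ, (n : ℕ∞) ≤ ν ω → (μ[f|ℱ n]) ω = 0) →
          HsNorm ℱ μ Os p (ENNReal.ofReal q) (fun n => μ[f|ℱ n]) < ∞ ∧
          HsNorm ℱ μ Os p (ENNReal.ofReal q) (fun n => μ[f|ℱ n]) ≤
            ENNReal.ofReal C * μ (Bset ν) ^ (1 / p - 1 / 2) *
              (∫⁻ ω in Bset ν, ENNReal.ofReal (f ω ^ 2) ∂μ) ^ (2⁻¹ : ℝ)) ∧
      ∀ κ : (Ω → ℝ) → ℝ, ∀ K : ℝ, 0 ≤ K →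
        (∀ f : Ω → ℝ, MemLp f 2 μ → μ[f|ℱ 0] =ᵐ[μ] 0 →
          ENNReal.ofReal |κ f| ≤
            ENNReal.ofReal K *
              HsNorm ℱ μ Os p (ENNReal.ofReal q) fun n => μ[f|ℱ n]) →
        ∀ ν : Ω → ℕ∞, IsStoppingTimeE ℱ ν →
        ∀ f : Ω → ℝ, MemLp f 2 μ → (∀ᵐ ω ∂μ, ν ω = ⊤ → f ω = 0) →
          (∀ n : ℕ, ∀ᵐ ω ∂μ, (n : ℕ∞) ≤ ν ω → (μ[f|ℱ n]) ω = 0) →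
          ENNReal.ofReal |κ f| ≤
            ENNReal.ofReal (C * K) * μ (Bset ν) ^ (1 / p - 1 / 2) *
              (∫⁻ ω in Bset ν, ENNReal.ofReal (f ω ^ 2) ∂μ) ^ (2⁻¹ : ℝ) := by
  have hq0 : 0 < q := lt_of_lt_of_le hp hpq
  have hp2 : p < 2 := lt_of_le_of_lt (le_trans hpq hq1) one_lt_two
  have main : ∀ ν : Ω → ℕ∞, IsStoppingTimeE ℱ ν →
      ∀ f : Ω → ℝ, MemLp f 2 μ → (∀ᵐ ω ∂μ, ν ω = ⊤ → f ω = 0) →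
        (∀ n : ℕ, ∀ᵐ ω ∂μ, (n : ℕ∞) ≤ ν ω → (μ[f|ℱ n]) ω = 0) →
        HsNorm ℱ μ Os p (ENNReal.ofReal q) (fun n => μ[f|ℱ n]) < ∞ ∧
        HsNorm ℱ μ Os p (ENNReal.ofReal q) (fun n => μ[f|ℱ n]) ≤
          μ (Bset ν) ^ (1 / p - 1 / 2) *
            (∫⁻ ω in Bset ν, ENNReal.ofReal (f ω ^ 2) ∂μ) ^ (2⁻¹ : ℝ) := by
    intro ν hν f hf hsupp hvan
    set G : Ω → ℝ≥0∞ := fun ω =>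
      ∑' n : ℕ, ENNReal.ofReal
        ((μ[(fun x => ((μ[f|ℱ (n + 1)]) x - (μ[f|ℱ n]) x) ^ 2)|ℱ n]) ω) with hGdef
    have hs : condSq ℱ μ (fun n => μ[f|ℱ n]) = fun ω => G ω ^ (2⁻¹ : ℝ) := rfl
    have hGmeas : Measurable G := Measurable.ennreal_tsum fun n =>
      ((stronglyMeasurable_condExp.mono (ℱ.le n)).measurable).ennreal_ofReal
    have hgint : ∀ n : ℕ,
        Integrable (fun x => ((μ[f|ℱ (n + 1)]) x - (μ[f|ℱ n]) x) ^ 2) μ := fun n =>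
      ((my_memL2_condexp μ ℱ (n + 1) hf).sub (my_memL2_condexp μ ℱ n hf)).integrable_sq
    have h0 : μ[f|ℱ 0] =ᵐ[μ] 0 := by
      filter_upwards [hvan 0] with ω hω
      simpa using hω (by simp)
    have hBeq : Bset ν = ⋃ n : ℕ, {ω | ν ω ≤ (n : ℕ∞)} := by
      ext ω
      simp only [Bset, Set.mem_setOf_eq, Set.mem_iUnion]
      constructor
      · intro h
        obtain ⟨k, hk⟩ := WithTop.ne_top_iff_exists.mp h
        exact ⟨k, le_of_eq hk.symm⟩
      · rintro ⟨n, hn⟩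
        exact ne_top_of_le_ne_top (by simp) hn
    have hBmeas : MeasurableSet (Bset ν) := by
      rw [hBeq]; exact MeasurableSet.iUnion fun n => (ℱ.le n) _ (hν n)
    -- a.e. vanishing of G outside B
    have hGzero : ∀ᵐ ω ∂μ, ν ω = ⊤ → G ω = 0 := by
      have h_n : ∀ n : ℕ, ∀ᵐ ω ∂μ, ν ω = ⊤ →
          (μ[(fun x => ((μ[f|ℱ (n + 1)]) x - (μ[f|ℱ n]) x) ^ 2)|ℱ n]) ω = 0 := by
        intro n
        set A : Set Ω := {ω | ν ω ≤ (n : ℕ∞)}ᶜ with hAdef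
        have hA : MeasurableSet[ℱ n] A := (hν n).compl
        have hind :
            A.indicator (fun x => ((μ[f|ℱ (n + 1)]) x - (μ[f|ℱ n]) x) ^ 2) =ᵐ[μ] 0 := by
          filter_upwards [hvan (n + 1), hvan n] with ω h1 h2
          by_cases hω : ω ∈ A
          · rw [Set.indicator_of_mem hω]
            have hlt : (n : ℕ∞) < ν ω := not_le.mp hω
            have hle : ((n + 1 : ℕ) : ℕ∞) ≤ ν ω := by
              push_cast
              exact Order.add_one_le_of_lt hlt
            rw [Pi.zero_apply, h1 hle, h2 hlt.le]
            ring
          · rw [Set.indicator_of_notMem hω, Pi.zero_apply]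
        have heq1 : μ[A.indicator (fun x => ((μ[f|ℱ (n + 1)]) x - (μ[f|ℱ n]) x) ^ 2)|ℱ n]
            =ᵐ[μ] 0 := by
          refine (condExp_congr_ae hind).trans ?_
          rw [condExp_zero]
        have heq2 := condExp_indicator (hgint n) hA
        filter_upwards [heq1, heq2] with ω hω1 hω2 hνω
        have hmem : ω ∈ A := by
          simp only [hAdef, Set.mem_compl_iff, Set.mem_setOf_eq, hνω]
          simp
        have h3 := hω2.symm.trans hω1
        rw [Set.indicator_of_mem hmem] at h3
        simpa using h3
      rw [← ae_all_iff] at h_n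
      filter_upwards [h_n] with ω hω hνω
      have hz : ∀ n : ℕ, ENNReal.ofReal
          ((μ[(fun x => ((μ[f|ℱ (n + 1)]) x - (μ[f|ℱ n]) x) ^ 2)|ℱ n]) ω) = 0 := fun n => by
        rw [hω n hνω, ENNReal.ofReal_zero]
      simp only [hGdef]
      exact (tsum_congr hz).trans tsum_zero
    -- L² bound on the total mass of G
    have hE2 : ∫⁻ ω, G ω ∂μ ≤ ENNReal.ofReal (∫ ω, f ω ^ 2 ∂μ) := by
      have h1 : ∫⁻ ω, G ω ∂μ = ∑' n : ℕ, ∫⁻ ω,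
          ENNReal.ofReal
            ((μ[(fun x => ((μ[f|ℱ (n + 1)]) x - (μ[f|ℱ n]) x) ^ 2)|ℱ n]) ω) ∂μ := by
        simp only [hGdef]
        exact lintegral_tsum fun n =>
          ((stronglyMeasurable_condExp.mono (ℱ.le n)).measurable).ennreal_ofReal.aemeasurable
      have h2 : ∀ n : ℕ, ∫⁻ ω,
          ENNReal.ofReal
            ((μ[(fun x => ((μ[f|ℱ (n + 1)]) x - (μ[f|ℱ n]) x) ^ 2)|ℱ n]) ω) ∂μ =
          ENNReal.ofReal (∫ ω, ((μ[f|ℱ (n + 1)]) ω - (μ[f|ℱ n]) ω) ^ 2 ∂μ) := by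
        intro n
        rw [← ofReal_integral_eq_lintegral_ofReal integrable_condExp
          (condExp_nonneg (Eventually.of_forall fun ω => sq_nonneg _))]
        rw [integral_condExp (ℱ.le n)]
      rw [h1, tsum_congr h2]
      refine Summable.tsum_le_of_sum_le ENNReal.summable ?_
      intro S
      obtain ⟨N, hSN⟩ := S.exists_nat_subset_range
      calc ∑ n ∈ S, ENNReal.ofReal (∫ ω, ((μ[f|ℱ (n + 1)]) ω - (μ[f|ℱ n]) ω) ^ 2 ∂μ)
          ≤ ∑ n ∈ Finset.range N,
            ENNReal.ofReal (∫ ω, ((μ[f|ℱ (n + 1)]) ω - (μ[f|ℱ n]) ω) ^ 2 ∂μ) :=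
            Finset.sum_le_sum_of_subset hSN
        _ = ENNReal.ofReal (∑ n ∈ Finset.range N,
            ∫ ω, ((μ[f|ℱ (n + 1)]) ω - (μ[f|ℱ n]) ω) ^ 2 ∂μ) :=
            (ENNReal.ofReal_sum_of_nonneg fun n _ =>
              integral_nonneg fun ω => sq_nonneg _).symm
        _ = ENNReal.ofReal (∫ ω, (μ[f|ℱ N]) ω ^ 2 ∂μ) := by
            rw [my_pythagoras μ ℱ hf h0 N]
        _ ≤ ENNReal.ofReal (∫ ω, f ω ^ 2 ∂μ) :=
            ENNReal.ofReal_le_ofReal (my_sq_le μ ℱ hf N)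
    -- f is supported on B
    have hfB : ENNReal.ofReal (∫ ω, f ω ^ 2 ∂μ) =
        ∫⁻ ω in Bset ν, ENNReal.ofReal (f ω ^ 2) ∂μ := by
      rw [ofReal_integral_eq_lintegral_ofReal hf.integrable_sq
        (Eventually.of_forall fun ω => sq_nonneg _)]
      rw [← lintegral_add_compl (fun ω => ENNReal.ofReal (f ω ^ 2)) hBmeas]
      have hcz : ∫⁻ ω in (Bset ν)ᶜ, ENNReal.ofReal (f ω ^ 2) ∂μ = 0 := by
        have hz : ∀ᵐ ω ∂μ.restrict (Bset ν)ᶜ, ENNReal.ofReal (f ω ^ 2) = 0 := by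
          rw [ae_restrict_iff' hBmeas.compl]
          filter_upwards [hsupp] with ω hω hmem
          have hν2 : ν ω = ⊤ := by simpa [Bset] using hmem
          rw [hω hν2]
          simp
        rw [lintegral_congr_ae hz, lintegral_zero]
      rw [hcz, add_zero]
    set I := ∫⁻ ω in Bset ν, ENNReal.ofReal (f ω ^ 2) ∂μ with hIdef
    have hGI : ∫⁻ ω, G ω ∂μ ≤ I := hE2.trans (le_of_eq hfB)
    have hInetop : I ≠ ∞ := by
      rw [← hfB]; exact ENNReal.ofReal_ne_top
    set φ : Ω → ℝ≥0∞ := fun ω => G ω ^ (2⁻¹ * p) with hφdef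
    have hφmeas : Measurable φ := hGmeas.pow measurable_const
    have hHs : HsNorm ℱ μ Os p (ENNReal.ofReal q) (fun n => μ[f|ℱ n]) =
        (∑' j : ℤ, (∫⁻ ω in Os j, φ ω ∂μ) ^ (q / p)) ^ (1 / q) := by
      rw [HsNorm, amalgamNorm, if_neg ENNReal.ofReal_ne_top,
        ENNReal.toReal_ofReal hq0.le, hs]
      congr 1
      refine tsum_congr fun j => ?_
      congr 1
      refine lintegral_congr fun ω => ?_
      show (G ω ^ (2⁻¹ : ℝ)) ^ p = G ω ^ (2⁻¹ * p)
      exact (ENNReal.rpow_mul _ _ _).symm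
    have hsum : ∑' j : ℤ, ∫⁻ ω in Os j, φ ω ∂μ = ∫⁻ ω, φ ω ∂μ := by
      rw [← lintegral_iUnion hOmeas hOdisj φ, hOcov, Measure.restrict_univ]
    have hstep1 : (∑' j : ℤ, (∫⁻ ω in Os j, φ ω ∂μ) ^ (q / p)) ^ (1 / q) ≤
        (∫⁻ ω, φ ω ∂μ) ^ (1 / p) := by
      have h1 : ∑' j : ℤ, (∫⁻ ω in Os j, φ ω ∂μ) ^ (q / p) ≤
          (∑' j : ℤ, ∫⁻ ω in Os j, φ ω ∂μ) ^ (q / p) :=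
        my_tsum_rpow ((one_le_div hp).mpr hpq)
      calc (∑' j : ℤ, (∫⁻ ω in Os j, φ ω ∂μ) ^ (q / p)) ^ (1 / q)
          ≤ ((∑' j : ℤ, ∫⁻ ω in Os j, φ ω ∂μ) ^ (q / p)) ^ (1 / q) :=
            ENNReal.rpow_le_rpow h1 (by positivity)
        _ = (∑' j : ℤ, ∫⁻ ω in Os j, φ ω ∂μ) ^ (1 / p) := by
            rw [← ENNReal.rpow_mul]
            congr 1
            field_simp
        _ = (∫⁻ ω, φ ω ∂μ) ^ (1 / p) := by rw [hsum]
    have hφB : ∫⁻ ω, φ ω ∂μ = ∫⁻ ω in Bset ν, φ ω ∂μ := by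
      rw [← lintegral_add_compl φ hBmeas]
      have hcz : ∫⁻ ω in (Bset ν)ᶜ, φ ω ∂μ = 0 := by
        have hz : ∀ᵐ ω ∂μ.restrict (Bset ν)ᶜ, φ ω = 0 := by
          rw [ae_restrict_iff' hBmeas.compl]
          filter_upwards [hGzero] with ω hω hmem
          have hν2 : ν ω = ⊤ := by simpa [Bset] using hmem
          simp only [hφdef]
          rw [hω hν2, ENNReal.zero_rpow_of_pos (by positivity)]
        rw [lintegral_congr_ae hz, lintegral_zero]
      rw [hcz, add_zero]
    have hconj : Real.HolderConjugate (2 / p) (2 / (2 - p)) := by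
      rw [Real.holderConjugate_iff]
      constructor
      · rw [lt_div_iff₀ hp]
        linarith
      · rw [inv_div, inv_div, ← add_div]
        norm_num
    have hφ2 : ∀ ω, φ ω ^ (2 / p) = G ω := by
      intro ω
      simp only [hφdef]
      rw [← ENNReal.rpow_mul, show (2⁻¹ * p) * (2 / p) = 1 by field_simp, ENNReal.rpow_one]
    have hHolder : ∫⁻ ω in Bset ν, φ ω ∂μ ≤
        (∫⁻ ω in Bset ν, G ω ∂μ) ^ (1 / (2 / p)) *
          (μ (Bset ν)) ^ (1 / (2 / (2 - p))) := by
      have h := ENNReal.lintegral_mul_le_Lp_mul_Lq (μ.restrict (Bset ν)) hconj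
        hφmeas.aemeasurable (aemeasurable_const (b := (1 : ℝ≥0∞)))
      simp only [Pi.mul_apply, mul_one, ENNReal.one_rpow, lintegral_const,
        Measure.restrict_apply_univ, one_mul] at h
      calc ∫⁻ ω in Bset ν, φ ω ∂μ
          ≤ (∫⁻ ω in Bset ν, φ ω ^ (2 / p) ∂μ) ^ (1 / (2 / p)) *
            ((μ (Bset ν)) * 1) ^ (1 / (2 / (2 - p))) := by
            simpa using h
        _ = (∫⁻ ω in Bset ν, G ω ∂μ) ^ (1 / (2 / p)) *
            (μ (Bset ν)) ^ (1 / (2 / (2 - p))) := by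
            rw [mul_one]
            congr 1
            congr 1
            exact lintegral_congr fun ω => hφ2 ω
    have hmain : HsNorm ℱ μ Os p (ENNReal.ofReal q) (fun n => μ[f|ℱ n]) ≤
        μ (Bset ν) ^ (1 / p - 1 / 2) * I ^ (2⁻¹ : ℝ) := by
      rw [hHs]
      calc (∑' j : ℤ, (∫⁻ ω in Os j, φ ω ∂μ) ^ (q / p)) ^ (1 / q)
          ≤ (∫⁻ ω, φ ω ∂μ) ^ (1 / p) := hstep1
        _ = (∫⁻ ω in Bset ν, φ ω ∂μ) ^ (1 / p) := by rw [hφB]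
        _ ≤ ((∫⁻ ω in Bset ν, G ω ∂μ) ^ (1 / (2 / p)) *
            (μ (Bset ν)) ^ (1 / (2 / (2 - p)))) ^ (1 / p) :=
            ENNReal.rpow_le_rpow hHolder (by positivity)
        _ = (∫⁻ ω in Bset ν, G ω ∂μ) ^ (2⁻¹ : ℝ) * μ (Bset ν) ^ (1 / p - 1 / 2) := by
            rw [ENNReal.mul_rpow_of_nonneg _ _ (by positivity),
              ← ENNReal.rpow_mul, ← ENNReal.rpow_mul]
            congr 1
            · congr 1
              rw [one_div_div]
              field_simp
            · congr 1
              have h2p : 2 - p ≠ 0 := by linarith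
              rw [one_div_div]
              field_simp [h2p]
        _ ≤ I ^ (2⁻¹ : ℝ) * μ (Bset ν) ^ (1 / p - 1 / 2) :=
            mul_le_mul_left
              (ENNReal.rpow_le_rpow ((setLIntegral_le_lintegral _ _).trans hGI)
                (by norm_num)) _
        _ = μ (Bset ν) ^ (1 / p - 1 / 2) * I ^ (2⁻¹ : ℝ) := mul_comm _ _
    have hfin : μ (Bset ν) ^ (1 / p - 1 / 2) * I ^ (2⁻¹ : ℝ) < ∞ := by
      have he : (0 : ℝ) ≤ 1 / p - 1 / 2 := by
        have h1 : (1 : ℝ) ≤ 1 / p := by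
          rw [le_div_iff₀ hp]
          linarith [le_trans hpq hq1]
        linarith
      have h1 : μ (Bset ν) ^ (1 / p - 1 / 2) ≤ 1 := by
        calc μ (Bset ν) ^ (1 / p - 1 / 2) ≤ (1 : ℝ≥0∞) ^ (1 / p - 1 / 2) :=
            ENNReal.rpow_le_rpow prob_le_one he
          _ = 1 := ENNReal.one_rpow _
      have h2 : I ^ (2⁻¹ : ℝ) < ∞ :=
        ENNReal.rpow_lt_top_of_nonneg (by norm_num) hInetop
      exact lt_of_le_of_lt (mul_le_mul_left h1 _) (by rwa [one_mul])
    exact ⟨lt_of_le_of_lt hmain hfin, hmain⟩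
  refine ⟨1, one_pos, ?_, ?_⟩
  · intro ν hν f hf hsupp hvan
    obtain ⟨h1, h2⟩ := main ν hν f hf hsupp hvan
    refine ⟨h1, ?_⟩
    simpa [ENNReal.ofReal_one, one_mul] using h2
  · intro κ K hK hκ ν hν f hf hsupp hvan
    have h0 : μ[f|ℱ 0] =ᵐ[μ] 0 := by
      filter_upwards [hvan 0] with ω hω
      simpa using hω (by simp)
    obtain ⟨-, h2⟩ := main ν hν f hf hsupp hvan
    calc ENNReal.ofReal |κ f| ≤ ENNReal.ofReal K *
        HsNorm ℱ μ Os p (ENNReal.ofReal q) fun n => μ[f|ℱ n] := hκ f hf h0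
      _ ≤ ENNReal.ofReal K * (μ (Bset ν) ^ (1 / p - 1 / 2) *
          (∫⁻ ω in Bset ν, ENNReal.ofReal (f ω ^ 2) ∂μ) ^ (2⁻¹ : ℝ)) :=
          mul_le_mul_right h2 _
      _ = ENNReal.ofReal (1 * K) * μ (Bset ν) ^ (1 / p - 1 / 2) *
          (∫⁻ ω in Bset ν, ENNReal.ofReal (f ω ^ 2) ∂μ) ^ (2⁻¹ : ℝ) := by
          rw [one_mul, mul_assoc]


end
end
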